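/- arXiv:1110.5014 — 8 statements merged into one kernel-verified Lean document; each statement's English description precedes it below -/
import Mathlib

section
/- For all n ≥ 1 and k ≥ 1, the number R(n,k) of permutations of {1,...,n} with k alternating runs satisfies the recurrence R(n,k) = k·R(n-1,k) + 2·R(n-1,k-1) + (n-k)·R(n-1,k-2), with initial values R(1,0) = 1 and R(1,k) = 0 for k ≥ 1. -/
open Finset Polynomial

/-- `pval π i` is the value `π(i+1)` of the permutation in one-based value convention
(values `1,…,n`), and `0` for indices out of range. -/
def pval {n : ℕ} (π : Equiv.Perm (Fin n)) (i : ℕ) : ℕ :=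
  if h : i < n then (π ⟨i, h⟩ : ℕ) + 1 else 0

/-- number of positions where `π` changes direction -/
def dirChanges {n : ℕ} (π : Equiv.Perm (Fin n)) : ℕ :=
  ((Finset.Ioo 0 (n - 1)).filter (fun i =>
    (pval π (i-1) < pval π i ∧ pval π (i+1) < pval π i) ∨
    (pval π i < pval π (i-1) ∧ pval π i < pval π (i+1)))).card

/-- number of alternating runs of `π` (one more than the number of direction
changes; `0` by convention when `n ≤ 1`). -/
def altRuns {n : ℕ} (π : Equiv.Perm (Fin n)) : ℕ :=
  if n ≤ 1 then 0 else dirChanges π + 1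

/-- `R(n,k)`: the number of permutations of `[n]` with `k` alternating runs. -/
def runNum (n k : ℕ) : ℕ :=
  (Finset.univ.filter (fun π : Equiv.Perm (Fin n) => altRuns π = k)).card

/-! ### Auxiliary definitions: change counts of boolean lists -/

/-- number of adjacent unequal pairs in a list of booleans -/
def chg : List Bool → ℕ
  | [] => 0
  | [_] => 0
  | a :: b :: t => (if a = b then 0 else 1) + chg (b :: t)

/-- the transformation of the descent list upon inserting a maximum at slot `j` -/
def Tb : List Bool → ℕ → List Bool
  | d, 0 => true :: d
  | [], _ => [false]
  | _ :: d, 1 => false :: true :: d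
  | b :: d, (j+2) => b :: Tb d (j+1)

/-- the descent list of a list of naturals -/
def dsc : List ℕ → List Bool
  | [] => []
  | [_] => []
  | a :: b :: t => decide (b < a) :: dsc (b :: t)

lemma chg_le : ∀ (l : List Bool), chg l ≤ l.length - 1
  | [] => by simp [chg]
  | [a] => by simp [chg]
  | a :: b :: t => by
    have := chg_le (b :: t)
    simp only [chg, List.length_cons] at *
    split <;> omega

lemma dsc_length : ∀ (l : List ℕ), (dsc l).length = l.length - 1
  | [] => by simp [dsc]
  | [a] => by simp [dsc]
  | a :: b :: t => by
    have := dsc_length (b :: t)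
    simp only [dsc, List.length_cons] at *
    omega

lemma peel2 {M : Type*} [AddCommMonoid M] (N : ℕ) (f : ℕ → M) :
    ∑ j ∈ Finset.range (N + 3), f j = (∑ j ∈ Finset.range (N + 1), f (j + 2)) + f 1 + f 0 := by
  rw [show N + 3 = (N + 2) + 1 by omega, Finset.sum_range_succ',
    show N + 2 = (N + 1) + 1 by omega, Finset.sum_range_succ']

lemma peel3 {M : Type*} [AddCommMonoid M] (N : ℕ) (f : ℕ → M) :
    ∑ j ∈ Finset.range (N + 1 + 3), f j
      = (∑ j ∈ Finset.range (N + 1), f ((j + 1) + 2)) + f 2 + f 1 + f 0 := by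
  rw [show N + 1 + 3 = (N + 3) + 1 by omega, Finset.sum_range_succ', peel2]

/-- The key counting identity: inserting a maximum into a sequence with descent list
`b :: t` at the `t.length + 3` possible slots produces descent lists whose change
numbers are distributed as `(chg+1)` copies of `chg`, `2` copies of `chg+1`, and
the rest `chg + 2`. -/
lemma keyPoly (t : List Bool) : ∀ b : Bool,
    ∑ j ∈ Finset.range (t.length + 3), (X : ℤ[X]) ^ chg (Tb (b :: t) j)
      = ((chg (b :: t) : ℤ[X]) + 1) * X ^ chg (b :: t) + 2 * X ^ (chg (b :: t) + 1)
        + ((t.length : ℤ[X]) - (chg (b :: t) : ℤ[X])) * X ^ (chg (b :: t) + 2) := by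
  induction t with
  | nil =>
    intro b
    rw [show ([] : List Bool).length + 3 = 2 + 1 by simp]
    rw [Finset.sum_range_succ, Finset.sum_range_succ, Finset.sum_range_one]
    cases b <;> simp [Tb, chg] <;> ring
  | cons c e' IH =>
    intro b
    have hIH := IH c
    rw [peel2] at hIH
    simp only [List.length_cons]
    rw [peel3]
    have hS : (∑ j ∈ Finset.range (e'.length + 1),
          (X : ℤ[X]) ^ chg (Tb (b :: c :: e') ((j + 1) + 2)))
        = X ^ (if b = c then 0 else 1) *
          ∑ j ∈ Finset.range (e'.length + 1), (X : ℤ[X]) ^ chg (Tb (c :: e') (j + 2)) := by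
      rw [Finset.mul_sum]
      refine Finset.sum_congr rfl fun j _ => ?_
      rw [show Tb (b :: c :: e') ((j + 1) + 2) = b :: Tb (c :: e') (j + 2) from by simp [Tb]]
      rw [show Tb (c :: e') (j + 2) = c :: Tb e' (j + 1) from by simp [Tb]]
      rw [show chg (b :: c :: Tb e' (j + 1))
          = (if b = c then 0 else 1) + chg (c :: Tb e' (j + 1)) from rfl, pow_add]
    rw [hS]
    have hSolve : ∑ j ∈ Finset.range (e'.length + 1), (X : ℤ[X]) ^ chg (Tb (c :: e') (j + 2))
        = ((chg (c :: e') : ℤ[X]) + 1) * X ^ chg (c :: e') + 2 * X ^ (chg (c :: e') + 1)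
          + ((e'.length : ℤ[X]) - (chg (c :: e') : ℤ[X])) * X ^ (chg (c :: e') + 2)
          - X ^ chg (Tb (c :: e') 1) - X ^ chg (Tb (c :: e') 0) := by
      rw [← hIH]; ring
    rw [hSolve]
    have h0 : Tb (c :: e') 0 = true :: c :: e' := rfl
    have h1 : Tb (c :: e') 1 = false :: true :: e' := rfl
    have g2 : Tb (b :: c :: e') 2 = b :: false :: true :: e' := by simp [Tb]
    have g1 : Tb (b :: c :: e') 1 = false :: true :: c :: e' := rfl
    have g0 : Tb (b :: c :: e') 0 = true :: b :: c :: e' := rfl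
    rw [h0, h1, g2, g1, g0]
    cases b <;> cases c <;>
      simp only [chg, if_true, if_false, Bool.true_eq_false, Bool.false_eq_true, ite_true,
        ite_false, reduceIte, Nat.cast_add, Nat.cast_one, Nat.cast_ofNat, Nat.cast_zero,
        List.length_cons] <;>
      push_cast <;> ring

lemma keyPolyC (t : List Bool) (b : Bool) :
    ∑ j ∈ Finset.range (t.length + 3), (X : ℤ[X]) ^ chg (Tb (b :: t) j)
      = C ((chg (b :: t) : ℤ) + 1) * X ^ chg (b :: t) + C 2 * X ^ (chg (b :: t) + 1)
        + C ((t.length : ℤ) - (chg (b :: t) : ℤ)) * X ^ (chg (b :: t) + 2) := by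
  rw [keyPoly t b]
  simp only [map_add, map_sub, map_one, map_natCast, map_ofNat]

lemma coeff_sum_pow (N k : ℕ) (c : ℕ → ℕ) :
    (∑ j ∈ Finset.range N, (X:ℤ[X]) ^ c j).coeff k
      = ∑ j ∈ Finset.range N, (if c j = k then (1:ℤ) else 0) := by
  rw [Polynomial.finset_sum_coeff]
  exact Finset.sum_congr rfl fun j _ => by rw [Polynomial.coeff_X_pow]; simp [eq_comm]

lemma coeffCX (a : ℤ) (e k : ℕ) : ((C a * X ^ e : ℤ[X])).coeff k = if e = k then a else 0 := by
  simp only [Polynomial.coeff_C_mul, Polynomial.coeff_X_pow, mul_ite, mul_one, mul_zero]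
  simp [eq_comm]

/-! ### bridging lists and insertions -/

lemma dsc_insertIdx : ∀ (l : List ℕ) (j M : ℕ), l ≠ [] → j ≤ l.length →
    (∀ x ∈ l, x < M) → dsc (l.insertIdx j M) = Tb (dsc l) j
  | [], _, _, h, _, _ => absurd rfl h
  | a :: t, 0, M, _, _, hM => by
    rw [List.insertIdx_zero]
    cases t with
    | nil => simp [dsc, Tb, hM a (by simp)]
    | cons b t' => simp [dsc, Tb, hM a (by simp)]
  | [a], j + 1, M, _, hj, hM => by
    have : j = 0 := by simpa using hj
    subst this
    simp only [List.insertIdx_succ_cons, List.insertIdx_zero]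
    have ha : a < M := hM a (by simp)
    simp [dsc, Tb, Nat.not_lt.mpr (Nat.le_of_lt ha)]
  | a :: b :: t', 1, M, _, hj, hM => by
    simp only [List.insertIdx_succ_cons, List.insertIdx_zero]
    have ha : a < M := hM a (by simp)
    have hb : b < M := hM b (by simp)
    simp [dsc, Tb, Nat.not_lt.mpr (Nat.le_of_lt ha), hb]
  | a :: b :: t', j + 2, M, _, hj, hM => by
    have ih := dsc_insertIdx (b :: t') (j + 1) M (by simp)
      (by simpa using Nat.le_of_succ_le_succ hj) (fun x hx => hM x (by simp [hx]))
    rw [List.insertIdx_succ_cons] at ih ⊢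
    rw [List.insertIdx_succ_cons]
    show decide (b < a) :: dsc (b :: t'.insertIdx j M) = _
    rw [ih]
    simp [dsc, Tb]

lemma ofFn_split (m : ℕ) (h : ℕ → Bool) :
    (List.ofFn fun i : Fin (m + 1) => h ↑i) = h 0 :: (List.ofFn fun i : Fin m => h (↑i + 1)) := by
  rw [List.ofFn_succ]
  simp

lemma ofFn_split' (m : ℕ) (h : ℕ → ℕ) :
    (List.ofFn fun i : Fin (m + 1) => h ↑i) = h 0 :: (List.ofFn fun i : Fin m => h (↑i + 1)) := by
  rw [List.ofFn_succ]
  simp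

lemma chg_ofFn : ∀ (m : ℕ) (g : ℕ → Bool),
    chg (List.ofFn fun i : Fin m => g ↑i)
      = ∑ i ∈ Finset.range (m - 1), (if g i = g (i + 1) then 0 else 1)
  | 0, g => by simp [chg]
  | 1, g => by simp [chg]
  | (m + 2), g => by
    have ih := chg_ofFn (m + 1) (fun i => g (i + 1))
    rw [ofFn_split (m + 1) g, ofFn_split m (fun i => g (i + 1))]
    rw [show chg (g 0 :: g (0 + 1) :: (List.ofFn fun i : Fin m => g (↑i + 1 + 1)))
        = (if g 0 = g (0 + 1) then 0 else 1)
          + chg (g (0 + 1) :: (List.ofFn fun i : Fin m => g (↑i + 1 + 1))) from rfl]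
    rw [show (g (0 + 1) :: (List.ofFn fun i : Fin m => g (↑i + 1 + 1)))
        = (List.ofFn fun i : Fin (m + 1) => g (↑i + 1)) from (ofFn_split m fun i => g (i + 1)).symm]
    rw [ih]
    rw [show m + 2 - 1 = m + 1 from rfl, Finset.sum_range_succ']
    simp [add_comm]

lemma dsc_ofFn : ∀ (m : ℕ) (g : ℕ → ℕ),
    dsc (List.ofFn fun i : Fin m => g ↑i)
      = List.ofFn fun i : Fin (m - 1) => decide (g (↑i + 1) < g ↑i)
  | 0, g => by simp [dsc]
  | 1, g => by simp [dsc]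
  | (m + 2), g => by
    have ih := dsc_ofFn (m + 1) (fun i => g (i + 1))
    rw [ofFn_split' (m + 1) g, ofFn_split' m (fun i => g (i + 1))]
    rw [show dsc (g 0 :: g (0 + 1) :: (List.ofFn fun i : Fin m => g (↑i + 1 + 1)))
        = decide (g (0 + 1) < g 0)
          :: dsc (g (0 + 1) :: (List.ofFn fun i : Fin m => g (↑i + 1 + 1))) from rfl]
    rw [show (g (0 + 1) :: (List.ofFn fun i : Fin m => g (↑i + 1 + 1)))
        = (List.ofFn fun i : Fin (m + 1) => g (↑i + 1)) from (ofFn_split' m fun i => g (i + 1)).symm]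
    rw [ih]
    rw [show ((List.ofFn fun i : Fin (m + 2 - 1) => decide (g (↑i + 1) < g ↑i)) : List Bool)
        = List.ofFn fun i : Fin (m + 1) => (fun j => decide (g (j + 1) < g j)) ↑i from rfl]
    rw [ofFn_split m (fun j => decide (g (j + 1) < g j))]
    simp

/-! ### the value list of a permutation and the insertion bijection -/

def Lv {n : ℕ} (π : Equiv.Perm (Fin n)) : List ℕ := List.ofFn fun i : Fin n => pval π ↑i

lemma pval_coe {n : ℕ} (π : Equiv.Perm (Fin n)) (i : Fin n) : pval π ↑i = (π i : ℕ) + 1 := by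
  simp [pval]

lemma pval_lt {n : ℕ} (π : Equiv.Perm (Fin n)) (i : ℕ) (h : i < n) :
    pval π i = (π ⟨i, h⟩ : ℕ) + 1 := dif_pos h

lemma Lv_mem_lt {n : ℕ} (π : Equiv.Perm (Fin n)) : ∀ x ∈ Lv π, x < n + 1 := by
  intro x hx
  simp only [Lv, List.mem_ofFn] at hx
  obtain ⟨i, rfl⟩ := hx
  have := (π i).isLt
  simp only [pval_coe]
  omega

def Eins {m : ℕ} (j : Fin (m + 1)) (σ : Equiv.Perm (Fin m)) : Equiv.Perm (Fin (m + 1)) :=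
  (finSuccEquiv' j).trans ((Equiv.optionCongr σ).trans (finSuccEquiv' (Fin.last m)).symm)

lemma Eins_self {m : ℕ} (j : Fin (m + 1)) (σ : Equiv.Perm (Fin m)) :
    Eins j σ j = Fin.last m := by
  simp [Eins, finSuccEquiv'_at, finSuccEquiv'_symm_none]

lemma Eins_succAbove {m : ℕ} (j : Fin (m + 1)) (σ : Equiv.Perm (Fin m)) (i : Fin m) :
    Eins j σ (j.succAbove i) = (σ i).castSucc := by
  simp [Eins, finSuccEquiv'_succAbove, finSuccEquiv'_symm_some]

lemma Eins_injective {m : ℕ} :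
    Function.Injective (fun p : Fin (m + 1) × Equiv.Perm (Fin m) => Eins p.1 p.2) := by
  rintro ⟨j, σ⟩ ⟨j', σ'⟩ h
  simp only at h
  have hj : j = j' := by
    by_contra hne
    obtain ⟨i, hi⟩ := Fin.exists_succAbove_eq hne
    have h1 : Eins j σ j = Fin.last m := Eins_self j σ
    have h2 : Eins j' σ' (j'.succAbove i) = (σ' i).castSucc := Eins_succAbove j' σ' i
    rw [hi] at h2
    rw [h, h2] at h1
    exact absurd h1 (Fin.ne_of_lt (Fin.castSucc_lt_last _))
  subst hj
  have hσ : σ = σ' := by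
    ext i
    have h1 := Eins_succAbove j σ i
    have h2 := Eins_succAbove j σ' i
    rw [h, h2] at h1
    exact Fin.val_eq_of_eq (Fin.castSucc_injective _ h1.symm)
  rw [hσ]

lemma Eins_bijective (m : ℕ) :
    Function.Bijective (fun p : Fin (m + 1) × Equiv.Perm (Fin m) => Eins p.1 p.2) := by
  rw [Fintype.bijective_iff_injective_and_card]
  refine ⟨Eins_injective, ?_⟩
  simp [Fintype.card_perm, Nat.factorial_succ]

lemma Lv_Eins {m : ℕ} (j : Fin (m + 1)) (σ : Equiv.Perm (Fin m)) :
    Lv (Eins j σ) = (Lv σ).insertIdx ↑j (m + 1) := by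
  have hlen : ((Lv σ).insertIdx ↑j (m + 1)).length = m + 1 := by
    rw [List.length_insertIdx, if_pos (by simp [Lv]; omega)]
    simp [Lv]
  apply List.ext_getElem (by rw [hlen]; simp [Lv])
  intro i h1 h2
  rw [hlen] at h2
  have hL : (Lv σ).length = m := by simp [Lv]
  rcases lt_trichotomy i ↑j with hij | hij | hij
  · have him : i < m := lt_of_lt_of_le hij (Nat.lt_succ_iff.mp j.isLt)
    rw [List.getElem_insertIdx_of_lt hij]
    simp only [Lv, List.getElem_ofFn]
    rw [pval_lt _ _ (show i < m + 1 by omega), pval_lt _ _ him]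
    have : (⟨i, h2⟩ : Fin (m + 1)) = j.succAbove ⟨i, him⟩ := by
      rw [Fin.succAbove_of_castSucc_lt]
      · rfl
      · simpa [Fin.lt_def] using hij
    rw [this, Eins_succAbove]
    simp
  · subst hij
    rw [List.getElem_insertIdx_self]
    simp only [Lv, List.getElem_ofFn]
    rw [pval_lt _ _ (show (j:ℕ) < m + 1 by omega)]
    have : (⟨(j:ℕ), h2⟩ : Fin (m + 1)) = j := by
      apply Fin.ext; simp
    rw [this, Eins_self]
    simp [Fin.last]
  · obtain ⟨t, rfl⟩ : ∃ t, i = ↑j + t + 1 := ⟨i - ↑j - 1, by omega⟩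
    have hjt : ↑j + t < m := by omega
    rw [List.getElem_insertIdx_add_succ _ _ _ _ (by omega)]
    simp only [Lv, List.getElem_ofFn]
    rw [pval_lt _ _ (show (j:ℕ) + t + 1 < m + 1 by omega), pval_lt _ _ hjt]
    have : (⟨↑j + t + 1, h2⟩ : Fin (m + 1)) = j.succAbove ⟨↑j + t, hjt⟩ := by
      rw [Fin.succAbove_of_le_castSucc]
      · rfl
      · simp [Fin.le_def]
    rw [this, Eins_succAbove]
    simp

/-! ### bridging `dirChanges` with the descent list -/

lemma pval_ne {n : ℕ} (π : Equiv.Perm (Fin n)) {a b : ℕ} (ha : a < n) (hb : b < n)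
    (hab : a ≠ b) : pval π a ≠ pval π b := by
  rw [pval_lt _ _ ha, pval_lt _ _ hb]
  intro h
  apply hab
  have h2 : (π ⟨a, ha⟩ : ℕ) = (π ⟨b, hb⟩ : ℕ) := by omega
  have h3 : π ⟨a, ha⟩ = π ⟨b, hb⟩ := Fin.ext h2
  have h4 := π.injective h3
  exact congrArg Fin.val h4

lemma hcond {A B C : ℕ} (hAB : A ≠ B) (hBC : B ≠ C) :
    (if ((A < B ∧ C < B) ∨ (B < A ∧ B < C)) then (1:ℕ) else 0)
      = if (decide (B < A) = decide (C < B)) then 0 else 1 := by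
  simp only [decide_eq_decide]
  split_ifs <;> omega

lemma dirChanges_bridge {n : ℕ} (hn : 2 ≤ n) (π : Equiv.Perm (Fin n)) :
    dirChanges π = chg (dsc (Lv π)) := by
  have hd : dsc (Lv π) = List.ofFn fun i : Fin (n - 1) => decide (pval π (↑i + 1) < pval π ↑i) :=
    dsc_ofFn n (fun x => pval π x)
  have hc : chg (List.ofFn fun i : Fin (n - 1) => decide (pval π (↑i + 1) < pval π ↑i))
      = ∑ i ∈ Finset.range (n - 1 - 1),
        (if decide (pval π (i + 1) < pval π i) = decide (pval π (i + 1 + 1) < pval π (i + 1))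
          then 0 else 1) :=
    chg_ofFn (n - 1) (fun x => decide (pval π (x + 1) < pval π x))
  rw [hd, hc, dirChanges, Finset.card_filter, ← Finset.Ico_add_one_left_eq_Ioo,
    Finset.sum_Ico_eq_sum_range]
  refine Finset.sum_congr rfl fun i hi => ?_
  simp only [Finset.mem_range] at hi
  rw [show 0 + 1 + i - 1 = i by omega, show 0 + 1 + i = i + 1 by omega]
  exact hcond (pval_ne π (by omega) (by omega) (by omega))
    (pval_ne π (by omega) (by omega) (by omega))

lemma altRuns_eq {n : ℕ} (hn : 2 ≤ n) (π : Equiv.Perm (Fin n)) :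
    altRuns π = chg (dsc (Lv π)) + 1 := by
  rw [altRuns, if_neg (by omega), dirChanges_bridge hn]

lemma altRuns_bounds {n : ℕ} (hn : 2 ≤ n) (π : Equiv.Perm (Fin n)) :
    1 ≤ altRuns π ∧ altRuns π ≤ n - 1 := by
  rw [altRuns_eq hn]
  have h1 := chg_le (dsc (Lv π))
  have h2 : (dsc (Lv π)).length = n - 1 := by rw [dsc_length]; simp [Lv]
  omega

lemma runNum_zero {m : ℕ} (hm : 2 ≤ m) : runNum m 0 = 0 := by
  rw [runNum, Finset.card_eq_zero, Finset.filter_eq_empty_iff]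
  intro π _
  have := altRuns_bounds hm π
  omega

lemma runNum_big {m t : ℕ} (hm : 2 ≤ m) (ht : m ≤ t) : runNum m t = 0 := by
  rw [runNum, Finset.card_eq_zero, Finset.filter_eq_empty_iff]
  intro π _
  have := altRuns_bounds hm π
  omega

/-! ### the inner count -/

lemma inner_count {m : ℕ} (hm : 2 ≤ m) (σ : Equiv.Perm (Fin m)) (k : ℕ) (hk : 1 ≤ k) :
    (∑ j ∈ Finset.range (m + 1), (if chg (Tb (dsc (Lv σ)) j) = k - 1 then (1:ℤ) else 0))
      = (if altRuns σ = k then (k:ℤ) else 0) + (if altRuns σ = k - 1 then 2 else 0)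
        + (if altRuns σ = k - 2 then (m:ℤ) + 1 - (k:ℤ) else 0) := by
  have hlen : (dsc (Lv σ)).length = m - 1 := by rw [dsc_length]; simp [Lv]
  have ha : altRuns σ = chg (dsc (Lv σ)) + 1 := altRuns_eq hm σ
  rcases hde : dsc (Lv σ) with _ | ⟨b, t⟩
  · rw [hde] at hlen; simp at hlen; omega
  · rw [hde] at hlen ha
    have hT : t.length = m - 2 := by simp at hlen; omega
    have hr : chg (b :: t) ≤ t.length := by
      have := chg_le (b :: t); simpa using this
    have hsum : (∑ j ∈ Finset.range (m + 1), (if chg (Tb (b :: t) j) = k - 1 then (1:ℤ) else 0))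
        = (∑ j ∈ Finset.range (t.length + 3), (X:ℤ[X]) ^ chg (Tb (b :: t) j)).coeff (k - 1) := by
      rw [coeff_sum_pow, show t.length + 3 = m + 1 by omega]
    rw [hsum, keyPolyC, coeff_add, coeff_add, coeffCX, coeffCX, coeffCX, ha]
    split_ifs <;> push_cast <;> omega

/-! ### the main recurrence -/

lemma main_rec (m k : ℕ) (hm : 2 ≤ m) (hk : 1 ≤ k) :
    (runNum (m + 1) k : ℤ) = k * runNum m k + 2 * runNum m (k - 1)
      + ((m:ℤ) + 1 - k) * runNum m (k - 2) := by
  have hcast : ∀ (M K : ℕ), (runNum M K : ℤ)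
      = ∑ π : Equiv.Perm (Fin M), (if altRuns π = K then (1:ℤ) else 0) := by
    intro M K
    rw [runNum, Finset.card_filter, Nat.cast_sum]
    simp
  rw [hcast (m + 1) k,
    ← Equiv.sum_comp (Equiv.ofBijective _ (Eins_bijective m))
      (fun π => if altRuns π = k then (1:ℤ) else 0)]
  simp only [Equiv.ofBijective_apply]
  rw [Fintype.sum_prod_type_right]
  have hval : ∀ (σ : Equiv.Perm (Fin m)) (j : Fin (m + 1)),
      altRuns (Eins j σ) = chg (Tb (dsc (Lv σ)) ↑j) + 1 := by
    intro σ j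
    have hne : Lv σ ≠ [] := by
      intro h
      have : (Lv σ).length = m := by simp [Lv]
      rw [h] at this
      simp at this
      omega
    rw [altRuns_eq (by omega), Lv_Eins,
      dsc_insertIdx (Lv σ) ↑j (m + 1) hne (by simp [Lv]; omega) (Lv_mem_lt σ)]
  have hinner : ∀ σ : Equiv.Perm (Fin m),
      (∑ j : Fin (m + 1), (if altRuns (Eins j σ) = k then (1:ℤ) else 0))
        = (if altRuns σ = k then (k:ℤ) else 0) + (if altRuns σ = k - 1 then 2 else 0)
          + (if altRuns σ = k - 2 then (m:ℤ) + 1 - (k:ℤ) else 0) := by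
    intro σ
    rw [← inner_count hm σ k hk,
      ← Fin.sum_univ_eq_sum_range (fun x => if chg (Tb (dsc (Lv σ)) x) = k - 1 then (1:ℤ) else 0)
        (m + 1)]
    refine Finset.sum_congr rfl fun j _ => ?_
    rw [hval σ j]
    exact if_congr (by omega) rfl rfl
  rw [Finset.sum_congr rfl fun σ _ => hinner σ]
  rw [Finset.sum_add_distrib, Finset.sum_add_distrib]
  have hterm : ∀ (c : ℤ) (K : ℕ),
      (∑ σ : Equiv.Perm (Fin m), (if altRuns σ = K then c else 0)) = c * runNum m K := by
    intro c K
    rw [hcast m K, Finset.mul_sum]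
    refine Finset.sum_congr rfl fun σ _ => ?_
    split_ifs <;> ring
  rw [hterm (k:ℤ) k, hterm 2 (k - 1), hterm ((m:ℤ) + 1 - (k:ℤ)) (k - 2)]

lemma altRuns_one' (π : Equiv.Perm (Fin 1)) : altRuns π = 0 := by simp [altRuns]

lemma altRuns_two' (π : Equiv.Perm (Fin 2)) : altRuns π = 1 := by
  simp [altRuns, dirChanges, show Finset.Ioo 0 1 = ∅ from rfl]

lemma runNum_one (k : ℕ) (hk : 1 ≤ k) : runNum 1 k = 0 := by
  rw [runNum, Finset.card_eq_zero, Finset.filter_eq_empty_iff]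
  intro π _
  rw [altRuns_one']
  omega

lemma runNum_two (k : ℕ) (hk : k ≠ 1) : runNum 2 k = 0 := by
  rw [runNum, Finset.card_eq_zero, Finset.filter_eq_empty_iff]
  intro π _
  rw [altRuns_two']
  omega

lemma runNum_two_one : runNum 2 1 = 2 := by
  rw [runNum, Finset.filter_true_of_mem (fun π _ => altRuns_two' π)]
  simp [Fintype.card_perm]

/-- The numbers `R(n,k)` of permutations of `[n]` with `k` alternating runs satisfy
André's recurrence, with initial values `R(1,0) = 1` and `R(1,k) = 0` for `k ≥ 1`. -/
theorem stmt0 :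
    runNum 1 0 = 1 ∧ (∀ k, 1 ≤ k → runNum 1 k = 0) ∧
    (∀ n k, 2 ≤ n → 1 ≤ k →
      runNum n k = k * runNum (n-1) k + 2 * runNum (n-1) (k-1)
        + (n - k) * (if 2 ≤ k then runNum (n-1) (k-2) else 0)) := by
  refine ⟨by decide, runNum_one, ?_⟩
  intro n k hn hk
  rcases Nat.lt_or_ge n 3 with h3 | h3
  · have hn2 : n = 2 := by omega
    subst hn2
    have hr1 : runNum 1 0 = 1 := by decide
    rcases eq_or_ne k 1 with rfl | hk1
    · rw [runNum_two_one]
      simp only [show (2:ℕ) - 1 = 1 from rfl, show (1:ℕ) - 1 = 0 from rfl]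
      rw [runNum_one 1 le_rfl, if_neg (by omega), hr1]
    · rw [runNum_two k hk1]
      simp only [show (2:ℕ) - 1 = 1 from rfl]
      have h2 : runNum 1 k = 0 := runNum_one k hk
      have h4 : runNum 1 (k - 1) = 0 := runNum_one _ (by omega)
      rcases eq_or_ne k 2 with rfl | hk2
      · rw [h2, h4]
        norm_num
      · have h5 : 2 - k = 0 := by omega
        rw [h2, h4, h5]
        simp
  · obtain ⟨m, rfl⟩ : ∃ m, n = m + 1 := ⟨n - 1, by omega⟩
    have hm : 2 ≤ m := by omega
    have hZ := main_rec m k hm hk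
    simp only [Nat.add_sub_cancel]
    by_cases hbig : m + 1 < k
    · have h0 : runNum m (k - 2) = 0 := runNum_big hm (by omega)
      have h1 : m + 1 - k = 0 := by omega
      rw [h0] at hZ
      have hZ' : (runNum (m + 1) k : ℤ) = k * runNum m k + 2 * runNum m (k - 1) := by
        rw [hZ]; ring
      rw [h1]
      simp only [Nat.zero_mul, add_zero]
      exact_mod_cast hZ'
    · by_cases hk2 : 2 ≤ k
      · rw [if_pos hk2]
        have hcast2 : ((m:ℤ) + 1 - k) = ((m + 1 - k : ℕ) : ℤ) := by omega
        rw [hcast2] at hZ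
        exact_mod_cast hZ
      · have hk1 : k = 1 := by omega
        subst hk1
        rw [if_neg (by omega)]
        have h0 : runNum m 0 = 0 := runNum_zero hm
        simp only [show (1:ℕ) - 1 = 0 from rfl, show (1:ℕ) - 2 = 0 from rfl] at hZ ⊢
        rw [h0] at hZ ⊢
        have : (runNum (m + 1) 1 : ℤ) = 1 * runNum m 1 + 2 * 0 + ((m:ℤ) + 1 - 1) * 0 := hZ
        push_cast at this
        omega
end

section
/- Define polynomials R_n(x) by R_1(x) = 1 and the recurrence R_{n+2}(x) = x(nx+2)·R_{n+1}(x) + x(1-x²)·R'_{n+1}(x). Then R_n(x) = Σ_{k=1}^{n-1} R(n,k)·x^k for all n ≥ 2, where R(n,k) is the number of permutations of [n] with k alternating runs. -/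
open Finset Polynomial

def insFun {n : ℕ} (σ : Equiv.Perm (Fin n)) (p : Fin (n+1)) : Fin (n+1) → Fin (n+1) :=
  p.insertNth (Fin.last n) (fun j => (σ j).castSucc)

lemma insFun_inj {n : ℕ} (σ : Equiv.Perm (Fin n)) (p : Fin (n+1)) :
    Function.Injective (insFun σ p) := by
  intro a b hab
  rcases eq_or_ne a p with ha | ha
  · rcases eq_or_ne b p with hb | hb
    · rw [ha, hb]
    · exfalso
      rcases Fin.exists_succAbove_eq hb with ⟨b', rfl⟩
      subst ha
      simp only [insFun, Fin.insertNth_apply_same, Fin.insertNth_apply_succAbove] at hab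
      exact absurd hab.symm (Fin.ne_of_lt ((σ b').castSucc_lt_last))
  · rcases Fin.exists_succAbove_eq ha with ⟨a', rfl⟩
    rcases eq_or_ne b p with hb | hb
    · exfalso
      subst hb
      simp only [insFun, Fin.insertNth_apply_same, Fin.insertNth_apply_succAbove] at hab
      exact absurd hab (Fin.ne_of_lt ((σ a').castSucc_lt_last))
    · rcases Fin.exists_succAbove_eq hb with ⟨b', rfl⟩
      simp only [insFun, Fin.insertNth_apply_succAbove, Fin.castSucc_inj] at hab
      rw [σ.injective hab]

noncomputable def ins {n : ℕ} (σ : Equiv.Perm (Fin n)) (p : Fin (n+1)) : Equiv.Perm (Fin (n+1)) :=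
  Equiv.ofBijective _ ((Finite.injective_iff_bijective).mp (insFun_inj σ p))

lemma ins_apply {n : ℕ} (σ : Equiv.Perm (Fin n)) (p : Fin (n+1)) (i : Fin (n+1)) :
    ins σ p i = insFun σ p i := rfl

lemma pval_ins_lt {n : ℕ} (σ : Equiv.Perm (Fin n)) (p : Fin (n+1)) {i : ℕ} (h : i < (p:ℕ)) :
    pval (ins σ p) i = pval σ i := by
  have hn : i < n := by omega
  have hn1 : i < n + 1 := by omega
  have : (⟨i, hn1⟩ : Fin (n+1)) = p.succAbove ⟨i, hn⟩ := by
    rw [Fin.succAbove_of_castSucc_lt]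
    · rfl
    · exact (Fin.lt_iff_val_lt_val).mpr h
  rw [pval, dif_pos hn1, ins_apply, insFun, this, Fin.insertNth_apply_succAbove]
  rw [pval, dif_pos hn]
  rfl

lemma pval_ins_self {n : ℕ} (σ : Equiv.Perm (Fin n)) (p : Fin (n+1)) :
    pval (ins σ p) (p:ℕ) = n + 1 := by
  have hn1 : (p:ℕ) < n + 1 := p.isLt
  have : (⟨(p:ℕ), hn1⟩ : Fin (n+1)) = p := rfl
  rw [pval, dif_pos hn1, ins_apply, insFun, this, Fin.insertNth_apply_same]
  rfl

lemma pval_ins_gt {n : ℕ} (σ : Equiv.Perm (Fin n)) (p : Fin (n+1)) {i : ℕ} (h : (p:ℕ) < i) :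
    pval (ins σ p) i = pval σ (i-1) := by
  by_cases hn1 : i < n + 1
  · have hn : i - 1 < n := by omega
    have : (⟨i, hn1⟩ : Fin (n+1)) = p.succAbove ⟨i-1, hn⟩ := by
      rw [Fin.succAbove_of_le_castSucc]
      · simp [Fin.ext_iff]; omega
      · simp [Fin.le_iff_val_le_val, Fin.castSucc]; omega
    rw [pval, dif_pos hn1, ins_apply, insFun, this, Fin.insertNth_apply_succAbove]
    rw [pval, dif_pos hn]
    rfl
  · rw [pval, dif_neg hn1, pval, dif_neg (by omega)]

/-- ascent word: `bw σ i = true` iff position `i-1 → i` is an ascent. Used for `i ∈ [1, n-1]`. -/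
def bw {n : ℕ} (σ : Equiv.Perm (Fin n)) (i : ℕ) : Bool :=
  decide (pval σ (i-1) < pval σ i)

/-- change word -/
def cw {n : ℕ} (σ : Equiv.Perm (Fin n)) (i : ℕ) : ℕ :=
  if bw σ i ≠ bw σ (i+1) then 1 else 0

lemma pval_le {n : ℕ} (σ : Equiv.Perm (Fin n)) (i : ℕ) : pval σ i ≤ n := by
  unfold pval; split
  · exact Nat.succ_le_of_lt (Fin.isLt _)
  · omega

lemma pval_ne_s1 {n : ℕ} (σ : Equiv.Perm (Fin n)) {i j : ℕ} (hi : i < n) (hj : j < n)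
    (hij : i ≠ j) : pval σ i ≠ pval σ j := by
  unfold pval
  rw [dif_pos hi, dif_pos hj]
  intro h
  have h2 : σ ⟨i, hi⟩ = σ ⟨j, hj⟩ := Fin.val_injective (by omega)
  have := σ.injective h2
  rw [Fin.mk.injEq] at this
  exact hij this

lemma dirChanges_eq_sum {n : ℕ} (σ : Equiv.Perm (Fin n)) :
    dirChanges σ = ∑ i ∈ Finset.Ico 1 (n-1), cw σ i := by
  have hIoo : Finset.Ioo 0 (n-1) = Finset.Ico 1 (n-1) := by
    ext i; simp only [Finset.mem_Ioo, Finset.mem_Ico]; omega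
  rw [dirChanges, Finset.card_filter, hIoo]
  refine Finset.sum_congr rfl (fun i hi => ?_)
  rw [Finset.mem_Ico] at hi
  have h1 : i - 1 < n := by omega
  have h2 : i < n := by omega
  have h3 : i + 1 < n := by omega
  have d1 : pval σ (i-1) ≠ pval σ i := pval_ne_s1 σ h1 h2 (by omega)
  have d2 : pval σ i ≠ pval σ (i+1) := pval_ne_s1 σ h2 h3 (by omega)
  have : ((pval σ (i-1) < pval σ i ∧ pval σ (i+1) < pval σ i) ∨
      (pval σ i < pval σ (i-1) ∧ pval σ i < pval σ (i+1))) ↔ (bw σ i ≠ bw σ (i+1)) := by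
    unfold bw
    simp only [Nat.add_sub_cancel]
    rw [ne_eq, decide_eq_decide]
    constructor
    · intro h hiff; omega
    · intro h; by_contra hc; push_neg at hc; apply h; constructor <;> intro <;> omega
  simp only [cw]
  by_cases hP : bw σ i ≠ bw σ (i+1)
  · rw [if_pos (this.mpr hP), if_pos hP]
  · rw [if_neg (fun hq => hP (this.mp hq)), if_neg hP]

section insbw
variable {n : ℕ} (σ : Equiv.Perm (Fin n)) (p : Fin (n+1))

lemma bw_ins_lt {i : ℕ} (h : i < (p:ℕ)) : bw (ins σ p) i = bw σ i := by
  unfold bw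
  rw [pval_ins_lt σ p h, pval_ins_lt σ p (by omega : i - 1 < (p:ℕ))]

lemma bw_ins_self (h : 1 ≤ (p:ℕ)) : bw (ins σ p) (p:ℕ) = true := by
  unfold bw
  rw [pval_ins_self, pval_ins_lt σ p (by omega : (p:ℕ) - 1 < (p:ℕ))]
  have := pval_le σ ((p:ℕ)-1)
  simp only [decide_eq_true_eq]
  omega

lemma bw_ins_succ : bw (ins σ p) ((p:ℕ)+1) = false := by
  unfold bw
  rw [Nat.add_sub_cancel, pval_ins_self, pval_ins_gt σ p (by omega : (p:ℕ) < (p:ℕ)+1)]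
  have := pval_le σ ((p:ℕ)+1-1)
  simp only [decide_eq_false_iff_not, not_lt]
  omega

lemma bw_ins_gt {i : ℕ} (h : (p:ℕ)+1 < i) : bw (ins σ p) i = bw σ (i-1) := by
  unfold bw
  rw [pval_ins_gt σ p (by omega : (p:ℕ) < i), pval_ins_gt σ p (by omega : (p:ℕ) < i-1)]

end insbw

lemma sum_Ico_pred (f : ℕ → ℕ) (a b : ℕ) :
    ∑ i ∈ Finset.Ico (a+1) (b+1), f (i-1) = ∑ i ∈ Finset.Ico a b, f i := by
  rw [Finset.sum_Ico_eq_sum_range, Finset.sum_Ico_eq_sum_range]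
  refine Finset.sum_congr (by congr 1; omega) (fun i _ => by congr 1; omega)

lemma sum_Ico_split (f : ℕ → ℕ) {a m b : ℕ} (h1 : a ≤ m) (h2 : m ≤ b) :
    ∑ i ∈ Finset.Ico a b, f i = ∑ i ∈ Finset.Ico a m, f i + ∑ i ∈ Finset.Ico m b, f i :=
  (Finset.sum_Ico_consecutive f h1 h2).symm

lemma sum_Ico_single (f : ℕ → ℕ) (a : ℕ) : ∑ i ∈ Finset.Ico a (a+1), f i = f a := by
  rw [Finset.sum_Ico_succ_top le_rfl, Finset.Ico_self, Finset.sum_empty, zero_add]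

/-- the increase in the number of direction changes when inserting the max at slot `p` -/
def delta (b : ℕ → Bool) (n p : ℕ) : ℕ :=
  if p = 0 then (if b 1 then 1 else 0)
  else if p = n then (if b (n-1) then 0 else 1)
  else if b p then (if p = n-1 then 1 else if b (p+1) then 2 else 0)
  else (if p = 1 then 1 else if b (p-1) then 0 else 2)

lemma delta_le (b : ℕ → Bool) (n p : ℕ) : delta b n p ≤ 2 := by
  unfold delta
  split_ifs <;> omega

lemma dirChanges_ins {n : ℕ} (hn : 2 ≤ n) (σ : Equiv.Perm (Fin n)) (p : Fin (n+1)) :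
    dirChanges (ins σ p) = dirChanges σ + delta (bw σ) n (p:ℕ) := by
  obtain ⟨P, hPdef⟩ : ∃ m : ℕ, m = (p:ℕ) := ⟨(p:ℕ), rfl⟩
  have hplt := p.isLt
  have hP : P ≤ n := by omega
  rw [← hPdef]
  have hn1 : n + 1 - 1 = n := by omega
  rw [dirChanges_eq_sum, dirChanges_eq_sum, hn1]
  have hlt : ∀ i, i + 1 < P → cw (ins σ p) i = cw σ i := by
    intro i h
    unfold cw
    rw [bw_ins_lt σ p (by omega), bw_ins_lt σ p (by omega)]
  have hgt : ∀ i, P + 1 < i → cw (ins σ p) i = cw σ (i-1) := by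
    intro i h
    unfold cw
    rw [bw_ins_gt σ p (by omega), bw_ins_gt σ p (by omega)]
    have e : i + 1 - 1 = i - 1 + 1 := by omega
    rw [e]
  by_cases hp0 : P = 0
  · have b1 : bw (ins σ p) 1 = false := by
      have h := bw_ins_succ σ p
      rw [← hPdef, hp0] at h
      simpa using h
    have b2 : bw (ins σ p) (1+1) = bw σ 1 := by
      rw [bw_ins_gt σ p (by omega)]
    have h1 : cw (ins σ p) 1 = (if bw σ 1 then 1 else 0) := by
      unfold cw
      rw [b1, b2]
      cases bw σ 1 <;> simp
    rw [sum_Ico_split _ (by omega : (1:ℕ) ≤ 2) (by omega : 2 ≤ n),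
      sum_Ico_single (cw (ins σ p)) 1, h1]
    have h2 : ∑ i ∈ Finset.Ico 2 n, cw (ins σ p) i = ∑ i ∈ Finset.Ico 1 (n-1), cw σ i := by
      rw [Finset.sum_congr rfl (fun i hi => hgt i (by rw [Finset.mem_Ico] at hi; omega))]
      have h3 := sum_Ico_pred (cw σ) 1 (n-1)
      rw [show n - 1 + 1 = n from by omega] at h3
      exact h3
    rw [h2, delta, if_pos hp0]
    omega
  by_cases hpn : P = n
  · have hb1 : bw (ins σ p) (n-1) = bw σ (n-1) := bw_ins_lt σ p (by omega)
    have hbn : bw (ins σ p) n = true := by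
      have h := bw_ins_self σ p (by omega)
      rw [← hPdef, hpn] at h
      exact h
    have h1 : cw (ins σ p) (n-1) = (if bw σ (n-1) then 0 else 1) := by
      unfold cw
      rw [show n - 1 + 1 = n from by omega, hb1, hbn]
      cases bw σ (n-1) <;> simp
    have h2 : ∀ i ∈ Finset.Ico 1 (n-1), cw (ins σ p) i = cw σ i := fun i hi =>
      hlt i (by rw [Finset.mem_Ico] at hi; omega)
    rw [sum_Ico_split _ (by omega : (1:ℕ) ≤ n-1) (by omega : n-1 ≤ n)]
    have h3 := sum_Ico_single (cw (ins σ p)) (n-1)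
    rw [show n - 1 + 1 = n from by omega] at h3
    have hd : delta (bw σ) n P = (if bw σ (n-1) then 0 else 1) := by
      unfold delta
      rw [if_neg hp0, if_pos hpn]
    rw [h3, h1, Finset.sum_congr rfl h2, hd]
  -- interior case
  have hP1 : 1 ≤ P := by omega
  have hPn : P < n := by omega
  have hbP : bw (ins σ p) P = true := by
    have h := bw_ins_self σ p (by omega)
    rw [← hPdef] at h
    exact h
  have hbsucc : bw (ins σ p) (P+1) = false := by
    have h := bw_ins_succ σ p
    rw [← hPdef] at h
    exact h
  have hcp : cw (ins σ p) P = 1 := by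
    unfold cw
    rw [hbP, hbsucc]
    simp
  by_cases hb : bw σ P = true
  · have key_tt : ∑ i ∈ Finset.Ico 1 P, cw (ins σ p) i = ∑ i ∈ Finset.Ico 1 P, cw σ i := by
      refine Finset.sum_congr rfl (fun i hi => ?_)
      rw [Finset.mem_Ico] at hi
      have e1 : bw (ins σ p) i = bw σ i := bw_ins_lt σ p (by omega)
      have e2 : bw (ins σ p) (i+1) = bw σ (i+1) := by
        rcases eq_or_lt_of_le (by omega : i + 1 ≤ P) with heq | hlt'
        · rw [heq, hbP]
          exact hb.symm
        · exact bw_ins_lt σ p (by omega)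
      unfold cw
      rw [e1, e2]
    by_cases hpn1 : P = n - 1
    · rw [sum_Ico_split _ (by omega : 1 ≤ P) (by omega : P ≤ n)]
      have h3 := sum_Ico_single (cw (ins σ p)) P
      rw [show P + 1 = n from by omega] at h3
      have hd : delta (bw σ) n P = 1 := by
        unfold delta
        rw [if_neg hp0, if_neg hpn, if_pos hb, if_pos hpn1]
      rw [h3, hcp, key_tt, hd, hpn1]
    · have hP2 : P + 2 ≤ n := by omega
      have hc1 : cw (ins σ p) (P+1) = (if bw σ (P+1) then 1 else 0) := by
        have e1 : bw (ins σ p) (P+1+1) = bw σ (P+1) := by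
          have h := bw_ins_gt σ p (by omega : (p:ℕ) + 1 < P + 1 + 1)
          rw [show P+1+1-1 = P+1 from by omega] at h
          exact h
        unfold cw
        rw [hbsucc, e1]
        cases bw σ (P+1) <;> simp
      have hshift : ∑ i ∈ Finset.Ico (P+2) n, cw (ins σ p) i
          = ∑ i ∈ Finset.Ico (P+1) (n-1), cw σ i := by
        rw [Finset.sum_congr rfl (fun i hi => hgt i (by rw [Finset.mem_Ico] at hi; omega))]
        have h3 := sum_Ico_pred (cw σ) (P+1) (n-1)
        rw [show n - 1 + 1 = n from by omega, show P + 1 + 1 = P + 2 from by omega] at h3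
        exact h3
      have hcsP : cw σ P = (if bw σ (P+1) then 0 else 1) := by
        unfold cw
        rw [hb]
        cases bw σ (P+1) <;> simp
      have hd : delta (bw σ) n P = (if bw σ (P+1) then 2 else 0) := by
        unfold delta
        rw [if_neg hp0, if_neg hpn, if_pos hb, if_neg hpn1]
      have h5 : ∑ i ∈ Finset.Ico (P+1) (P+2), cw (ins σ p) i = cw (ins σ p) (P+1) := by
        have h := sum_Ico_single (cw (ins σ p)) (P+1)
        rw [show P + 1 + 1 = P + 2 from by omega] at h
        exact h
      rw [sum_Ico_split _ (by omega : 1 ≤ P) (by omega : P ≤ n),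
        sum_Ico_split (cw (ins σ p)) (by omega : P ≤ P + 2) (by omega : P + 2 ≤ n),
        sum_Ico_split (cw (ins σ p)) (by omega : P ≤ P + 1) (by omega : P + 1 ≤ P + 2),
        sum_Ico_single (cw (ins σ p)) P, h5, hcp, hc1, hshift, key_tt,
        sum_Ico_split (cw σ) (by omega : 1 ≤ P) (by omega : P ≤ n - 1),
        sum_Ico_split (cw σ) (by omega : P ≤ P + 1) (by omega : P + 1 ≤ n - 1),
        sum_Ico_single (cw σ) P, hcsP, hd]
      cases bw σ (P+1) <;> simp <;> omega
  · have hbf : bw σ P = false := by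
      revert hb
      cases bw σ P <;> simp
    have key_ff : ∀ i, P + 1 ≤ i → cw (ins σ p) i = cw σ (i-1) := by
      intro i hi
      rcases eq_or_lt_of_le hi with heq | hlt'
      · subst heq
        have e2 : bw (ins σ p) (P+1+1) = bw σ (P+1) := by
          have h := bw_ins_gt σ p (by omega : (p:ℕ) + 1 < P + 1 + 1)
          rw [show P+1+1-1 = P+1 from by omega] at h
          exact h
        unfold cw
        rw [show P + 1 - 1 = P from by omega, hbsucc, e2, hbf]
      · exact hgt i hlt'
    by_cases hp1 : P = 1
    · have h1 : cw (ins σ p) 1 = 1 := by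
        have h := hcp
        rw [hp1] at h
        exact h
      rw [sum_Ico_split _ (by omega : (1:ℕ) ≤ 2) (by omega : 2 ≤ n),
        sum_Ico_single (cw (ins σ p)) 1, h1]
      have h2 : ∑ i ∈ Finset.Ico 2 n, cw (ins σ p) i = ∑ i ∈ Finset.Ico 1 (n-1), cw σ i := by
        rw [Finset.sum_congr rfl (fun i hi => key_ff i (by rw [Finset.mem_Ico] at hi; omega))]
        have h3 := sum_Ico_pred (cw σ) 1 (n-1)
        rw [show n - 1 + 1 = n from by omega] at h3
        exact h3
      have hd : delta (bw σ) n P = 1 := by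
        unfold delta
        rw [if_neg hp0, if_neg hpn, if_neg (by rw [hbf]; simp), if_pos hp1]
      rw [h2, hd]
      omega
    · have hP2 : 2 ≤ P := by omega
      have key_lo : ∑ i ∈ Finset.Ico 1 (P-1), cw (ins σ p) i
          = ∑ i ∈ Finset.Ico 1 (P-1), cw σ i :=
        Finset.sum_congr rfl (fun i hi => hlt i (by rw [Finset.mem_Ico] at hi; omega))
      have hcm : cw (ins σ p) (P-1) = (if bw σ (P-1) then 0 else 1) := by
        have e1 : bw (ins σ p) (P-1) = bw σ (P-1) := bw_ins_lt σ p (by omega)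
        unfold cw
        rw [show P - 1 + 1 = P from by omega, e1, hbP]
        cases bw σ (P-1) <;> simp
      have hcsm : cw σ (P-1) = (if bw σ (P-1) then 1 else 0) := by
        unfold cw
        rw [show P - 1 + 1 = P from by omega, hbf]
        cases bw σ (P-1) <;> simp
      have hshift : ∑ i ∈ Finset.Ico (P+1) n, cw (ins σ p) i
          = ∑ i ∈ Finset.Ico P (n-1), cw σ i := by
        rw [Finset.sum_congr rfl (fun i hi => key_ff i (by rw [Finset.mem_Ico] at hi; omega))]
        have h3 := sum_Ico_pred (cw σ) P (n-1)
        rw [show n - 1 + 1 = n from by omega] at h3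
        exact h3
      have hd : delta (bw σ) n P = (if bw σ (P-1) then 0 else 2) := by
        unfold delta
        rw [if_neg hp0, if_neg hpn, if_neg (by rw [hbf]; simp), if_neg hp1]
      have h4 : ∑ i ∈ Finset.Ico (P-1) P, cw (ins σ p) i = cw (ins σ p) (P-1) := by
        have h := sum_Ico_single (cw (ins σ p)) (P-1)
        rw [show P - 1 + 1 = P from by omega] at h
        exact h
      have h4s : ∑ i ∈ Finset.Ico (P-1) P, cw σ i = cw σ (P-1) := by
        have h := sum_Ico_single (cw σ) (P-1)
        rw [show P - 1 + 1 = P from by omega] at h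
        exact h
      rw [sum_Ico_split _ (by omega : 1 ≤ P-1) (by omega : P-1 ≤ n),
        sum_Ico_split (cw (ins σ p)) (by omega : P-1 ≤ P+1) (by omega : P+1 ≤ n),
        sum_Ico_split (cw (ins σ p)) (by omega : P-1 ≤ P) (by omega : P ≤ P + 1),
        h4, sum_Ico_single (cw (ins σ p)) P, hcp, hcm, key_lo, hshift,
        sum_Ico_split (cw σ) (by omega : 1 ≤ P-1) (by omega : P-1 ≤ n-1),
        sum_Ico_split (cw σ) (by omega : P-1 ≤ P) (by omega : P ≤ n-1),
        h4s, hcsm, hd]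
      cases bw σ (P-1) <;> simp <;> omega

lemma altRuns_pos {n : ℕ} (hn : 2 ≤ n) (σ : Equiv.Perm (Fin n)) : 1 ≤ altRuns σ := by
  unfold altRuns
  rw [if_neg (by omega)]
  omega

lemma dirChanges_le {n : ℕ} (σ : Equiv.Perm (Fin n)) : dirChanges σ ≤ n - 2 := by
  unfold dirChanges
  calc _ ≤ (Finset.Ioo 0 (n-1)).card := Finset.card_filter_le _ _
  _ = n - 2 := by rw [Nat.card_Ioo]; omega

lemma altRuns_le {n : ℕ} (hn : 2 ≤ n) (σ : Equiv.Perm (Fin n)) : altRuns σ ≤ n - 1 := by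
  unfold altRuns
  rw [if_neg (by omega)]
  have := dirChanges_le σ
  omega

lemma altRuns_ins {n : ℕ} (hn : 2 ≤ n) (σ : Equiv.Perm (Fin n)) (p : Fin (n+1)) :
    altRuns (ins σ p) = altRuns σ + delta (bw σ) n (p:ℕ) := by
  unfold altRuns
  rw [if_neg (by omega), if_neg (by omega), dirChanges_ins hn σ p]
  omega

lemma telescope (b : ℕ → Bool) {m : ℕ} (hm : 1 ≤ m) :
    ((∑ i ∈ Finset.Ico 1 m, if b i = true ∧ b (i+1) = false then 1 else 0)
      + if b m then 1 else 0)
    = (∑ i ∈ Finset.Ico 1 m, if b i = false ∧ b (i+1) = true then 1 else 0)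
      + if b 1 then 1 else 0 := by
  induction m with
  | zero => omega
  | succ m ih =>
    rcases Nat.lt_or_ge m 1 with hm1 | hm1
    · interval_cases m
      simp
    · rw [Finset.sum_Ico_succ_top hm1, Finset.sum_Ico_succ_top hm1]
      have h := ih hm1
      cases hbm : b m <;> cases hbm1 : b (m+1) <;> rw [hbm] at h <;> simp [hbm, hbm1] at h ⊢ <;>
        omega

lemma card_delta_eq {n : ℕ} (σ : Equiv.Perm (Fin n)) (d : ℕ) :
    (Finset.univ.filter fun p : Fin (n+1) => delta (bw σ) n (p:ℕ) = d).card
      = ∑ i ∈ Finset.range (n+1), if delta (bw σ) n i = d then 1 else 0 := by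
  rw [Finset.card_filter]
  exact Fin.sum_univ_eq_sum_range (fun i => if delta (bw σ) n i = d then 1 else 0) (n+1)

lemma count_delta_zero {n : ℕ} (hn : 2 ≤ n) (σ : Equiv.Perm (Fin n)) :
    (Finset.univ.filter fun p : Fin (n+1) => delta (bw σ) n (p:ℕ) = 0).card
      = dirChanges σ + 1 := by
  rw [card_delta_eq, Finset.range_eq_Ico]
  rw [sum_Ico_split _ (by omega : (0:ℕ) ≤ 1) (by omega : 1 ≤ n+1),
    sum_Ico_split _ (by omega : (1:ℕ) ≤ n) (by omega : n ≤ n+1),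
    sum_Ico_single (fun i => if delta (bw σ) n i = 0 then 1 else 0) n]
  have h00 : ∑ i ∈ Finset.Ico 0 1, (if delta (bw σ) n i = 0 then 1 else 0)
      = (if bw σ 1 then 0 else 1) := by
    rw [← Finset.range_eq_Ico, Finset.range_one, Finset.sum_singleton]
    unfold delta
    cases bw σ 1 <;> simp
  have h0n : (if delta (bw σ) n n = 0 then 1 else 0) = (if bw σ (n-1) then 1 else 0) := by
    unfold delta
    rw [if_neg (by omega : ¬ n = 0), if_pos rfl]
    cases bw σ (n-1) <;> simp
  have hsplit : ∀ i ∈ Finset.Ico 1 n, (if delta (bw σ) n i = 0 then 1 else 0)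
      = ((if ¬i = n-1 ∧ bw σ i = true ∧ bw σ (i+1) = false then 1 else 0)
        + (if ¬i = 1 ∧ bw σ i = false ∧ bw σ (i-1) = true then 1 else 0) : ℕ) := by
    intro i hi
    rw [Finset.mem_Ico] at hi
    unfold delta
    rw [if_neg (by omega : ¬ i = 0), if_neg (by omega : ¬ i = n)]
    by_cases hbi : bw σ i = true
    · rw [if_pos hbi]
      have hr2 : (if ¬i = 1 ∧ bw σ i = false ∧ bw σ (i-1) = true then 1 else 0 : ℕ) = 0 := by
        rw [if_neg]
        rintro ⟨-, h2, -⟩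
        rw [hbi] at h2
        simp at h2
      rw [hr2, add_zero]
      by_cases hin : i = n-1
      · rw [if_pos hin]
        simp [hin]
      · rw [if_neg hin]
        cases hbi1 : bw σ (i+1) <;> simp [hbi, hin]
    · rw [if_neg hbi]
      have hbf : bw σ i = false := by revert hbi; cases bw σ i <;> simp
      have hr1 : (if ¬i = n-1 ∧ bw σ i = true ∧ bw σ (i+1) = false then 1 else 0 : ℕ) = 0 := by
        rw [if_neg]
        rintro ⟨-, h2, -⟩
        rw [hbf] at h2
        simp at h2
      rw [hr1, zero_add]
      by_cases hi1 : i = 1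
      · rw [if_pos hi1]
        simp [hi1]
      · rw [if_neg hi1]
        cases hbm : bw σ (i-1) <;> simp [hbf, hi1]
  rw [Finset.sum_congr rfl hsplit, Finset.sum_add_distrib]
  have hP : ∑ i ∈ Finset.Ico 1 n, (if ¬i = n-1 ∧ bw σ i = true ∧ bw σ (i+1) = false then 1 else 0)
      = ∑ i ∈ Finset.Ico 1 (n-1), (if bw σ i = true ∧ bw σ (i+1) = false then 1 else 0) := by
    rw [sum_Ico_split _ (by omega : (1:ℕ) ≤ n-1) (by omega : n-1 ≤ n)]
    have h1 : ∑ i ∈ Finset.Ico (n-1) n,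
        (if ¬i = n-1 ∧ bw σ i = true ∧ bw σ (i+1) = false then 1 else 0) = 0 := by
      have h2 := sum_Ico_single
        (fun i => if ¬i = n-1 ∧ bw σ i = true ∧ bw σ (i+1) = false then 1 else 0) (n-1)
      rw [show n - 1 + 1 = n from by omega] at h2
      rw [h2, if_neg]
      rintro ⟨hc, -⟩
      exact hc rfl
    rw [h1, add_zero]
    exact Finset.sum_congr rfl (fun i hi =>
      if_congr (and_iff_right (by rw [Finset.mem_Ico] at hi; omega)) rfl rfl)
  have hQ : ∑ i ∈ Finset.Ico 1 n, (if ¬i = 1 ∧ bw σ i = false ∧ bw σ (i-1) = true then 1 else 0)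
      = ∑ i ∈ Finset.Ico 1 (n-1), (if bw σ i = true ∧ bw σ (i+1) = false then 1 else 0) := by
    rw [sum_Ico_split _ (by omega : (1:ℕ) ≤ 2) (by omega : 2 ≤ n)]
    have h1 : ∑ i ∈ Finset.Ico 1 2,
        (if ¬i = 1 ∧ bw σ i = false ∧ bw σ (i-1) = true then 1 else 0) = 0 := by
      have h2 := sum_Ico_single
        (fun i => if ¬i = 1 ∧ bw σ i = false ∧ bw σ (i-1) = true then 1 else 0) 1
      rw [show (1:ℕ) + 1 = 2 from rfl] at h2
      rw [h2, if_neg]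
      rintro ⟨hc, -⟩
      exact hc rfl
    rw [h1, zero_add]
    have h2 : ∑ i ∈ Finset.Ico 2 n, (if ¬i = 1 ∧ bw σ i = false ∧ bw σ (i-1) = true then 1 else 0)
        = ∑ i ∈ Finset.Ico 2 n, (if bw σ (i-1) = true ∧ bw σ (i-1+1) = false then 1 else 0) := by
      refine Finset.sum_congr rfl (fun i hi => ?_)
      rw [Finset.mem_Ico] at hi
      rw [show i - 1 + 1 = i from by omega]
      refine if_congr ?_ rfl rfl
      constructor
      · rintro ⟨-, a, c⟩; exact ⟨c, a⟩
      · rintro ⟨c, a⟩; exact ⟨by omega, a, c⟩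
    rw [h2]
    have h3 : ∑ i ∈ Finset.Ico (1+1) ((n-1)+1), (if bw σ (i-1) = true ∧ bw σ (i-1+1) = false then 1 else 0)
        = ∑ i ∈ Finset.Ico 1 (n-1), (if bw σ i = true ∧ bw σ (i+1) = false then 1 else 0) :=
      sum_Ico_pred (fun j => if bw σ j = true ∧ bw σ (j+1) = false then 1 else 0) 1 (n-1)
    rw [show n - 1 + 1 = n from by omega, show (1:ℕ) + 1 = 2 from rfl] at h3
    rw [h3]
  have hdc : dirChanges σ
      = ∑ i ∈ Finset.Ico 1 (n-1), (if bw σ i = true ∧ bw σ (i+1) = false then 1 else 0)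
      + ∑ i ∈ Finset.Ico 1 (n-1), (if bw σ i = false ∧ bw σ (i+1) = true then 1 else 0) := by
    rw [dirChanges_eq_sum, ← Finset.sum_add_distrib]
    refine Finset.sum_congr rfl (fun i _ => ?_)
    unfold cw
    cases bw σ i <;> cases bw σ (i+1) <;> simp
  have htel := telescope (bw σ) (by omega : 1 ≤ n-1)
  rw [hP, hQ, h00, h0n, hdc]
  cases hb1 : bw σ 1 <;> cases hbn1 : bw σ (n-1) <;> simp only [hb1, hbn1] at htel ⊢ <;>
    simp at htel ⊢ <;> omega

lemma count_delta_one {n : ℕ} (hn : 2 ≤ n) (σ : Equiv.Perm (Fin n)) :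
    (Finset.univ.filter fun p : Fin (n+1) => delta (bw σ) n (p:ℕ) = 1).card = 2 := by
  rw [card_delta_eq, Finset.range_eq_Ico]
  rw [sum_Ico_split _ (by omega : (0:ℕ) ≤ 1) (by omega : 1 ≤ n+1),
    sum_Ico_split _ (by omega : (1:ℕ) ≤ n) (by omega : n ≤ n+1),
    sum_Ico_single (fun i => if delta (bw σ) n i = 1 then 1 else 0) n]
  have h00 : ∑ i ∈ Finset.Ico 0 1, (if delta (bw σ) n i = 1 then 1 else 0)
      = (if bw σ 1 then 1 else 0) := by
    rw [← Finset.range_eq_Ico, Finset.range_one, Finset.sum_singleton]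
    unfold delta
    cases bw σ 1 <;> simp
  have h0n : (if delta (bw σ) n n = 1 then 1 else 0) = (if bw σ (n-1) then 0 else 1) := by
    unfold delta
    rw [if_neg (by omega : ¬ n = 0), if_pos rfl]
    cases bw σ (n-1) <;> simp
  have hsplit : ∀ i ∈ Finset.Ico 1 n, (if delta (bw σ) n i = 1 then 1 else 0)
      = ((if i = n-1 ∧ bw σ i = true then 1 else 0)
        + (if i = 1 ∧ bw σ i = false then 1 else 0) : ℕ) := by
    intro i hi
    rw [Finset.mem_Ico] at hi
    unfold delta
    rw [if_neg (by omega : ¬ i = 0), if_neg (by omega : ¬ i = n)]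
    by_cases hbi : bw σ i = true
    · have hr2 : (if i = 1 ∧ bw σ i = false then 1 else 0 : ℕ) = 0 := by
        rw [if_neg]
        rintro ⟨-, h2⟩
        rw [hbi] at h2
        simp at h2
      rw [if_pos hbi, hr2, add_zero]
      by_cases hin : i = n-1
      · subst hin
        rw [if_pos rfl]
        simp [hbi]
      · rw [if_neg hin]
        cases hbi1 : bw σ (i+1) <;> simp [hbi, hin]
    · have hbf : bw σ i = false := by revert hbi; cases bw σ i <;> simp
      have hr1 : (if i = n-1 ∧ bw σ i = true then 1 else 0 : ℕ) = 0 := by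
        rw [if_neg]
        rintro ⟨-, h2⟩
        rw [hbf] at h2
        simp at h2
      rw [if_neg hbi, hr1, zero_add]
      by_cases hi1 : i = 1
      · subst hi1
        rw [if_pos rfl]
        simp [hbf]
      · rw [if_neg hi1]
        cases hbm : bw σ (i-1) <;> simp [hbf, hi1]
  rw [Finset.sum_congr rfl hsplit, Finset.sum_add_distrib]
  have hA : ∑ i ∈ Finset.Ico 1 n, (if i = n-1 ∧ bw σ i = true then 1 else 0)
      = (if bw σ (n-1) then 1 else 0) := by
    have hc : ∀ i ∈ Finset.Ico 1 n, (if i = n-1 ∧ bw σ i = true then 1 else 0 : ℕ)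
        = (if i = n-1 then (if bw σ (n-1) then 1 else 0) else 0) := by
      intro i _
      by_cases h : i = n-1
      · simp [h]
      · simp [h]
    rw [Finset.sum_congr rfl hc,
      Finset.sum_ite_eq' (Finset.Ico 1 n) (n-1) (fun _ => if bw σ (n-1) = true then 1 else 0),
      if_pos (by rw [Finset.mem_Ico]; omega)]
  have hB : ∑ i ∈ Finset.Ico 1 n, (if i = 1 ∧ bw σ i = false then 1 else 0)
      = (if bw σ 1 then 0 else 1) := by
    have hc : ∀ i ∈ Finset.Ico 1 n, (if i = 1 ∧ bw σ i = false then 1 else 0 : ℕ)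
        = (if i = 1 then (if bw σ 1 then 0 else 1) else 0) := by
      intro i _
      by_cases h : i = 1
      · subst h
        cases bw σ 1 <;> simp
      · simp [h]
    rw [Finset.sum_congr rfl hc,
      Finset.sum_ite_eq' (Finset.Ico 1 n) 1 (fun _ => if bw σ 1 = true then 0 else 1),
      if_pos (by rw [Finset.mem_Ico]; omega)]
  rw [h00, h0n, hA, hB]
  cases hb1 : bw σ 1 <;> cases hbn1 : bw σ (n-1) <;> simp [hb1, hbn1]

lemma count_delta_total {n : ℕ} (hn : 2 ≤ n) (σ : Equiv.Perm (Fin n)) :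
    (Finset.univ.filter fun p : Fin (n+1) => delta (bw σ) n (p:ℕ) = 0).card
    + (Finset.univ.filter fun p : Fin (n+1) => delta (bw σ) n (p:ℕ) = 1).card
    + (Finset.univ.filter fun p : Fin (n+1) => delta (bw σ) n (p:ℕ) = 2).card = n + 1 := by
  rw [card_delta_eq, card_delta_eq, card_delta_eq, ← Finset.sum_add_distrib,
    ← Finset.sum_add_distrib]
  have hone : ∀ i ∈ Finset.range (n+1),
      ((if delta (bw σ) n i = 0 then 1 else 0) + (if delta (bw σ) n i = 1 then 1 else 0)
        + (if delta (bw σ) n i = 2 then 1 else 0) : ℕ) = 1 := by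
    intro i _
    have := delta_le (bw σ) n i
    split_ifs <;> omega
  rw [Finset.sum_congr rfl hone, Finset.sum_const, Finset.card_range, smul_eq_mul, mul_one]

lemma count_delta_two {n : ℕ} (hn : 2 ≤ n) (σ : Equiv.Perm (Fin n)) :
    (Finset.univ.filter fun p : Fin (n+1) => delta (bw σ) n (p:ℕ) = 2).card
      = n - 2 - dirChanges σ := by
  have h0 := count_delta_zero hn σ
  have h1 := count_delta_one hn σ
  have ht := count_delta_total hn σ
  have hd := dirChanges_le σ
  omega

lemma card_slots {n : ℕ} (hn : 2 ≤ n) (σ : Equiv.Perm (Fin n)) (k : ℕ) :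
    (Finset.univ.filter fun p : Fin (n+1) => altRuns (ins σ p) = k).card
      = (if k = altRuns σ then altRuns σ else 0) + (if k = altRuns σ + 1 then 2 else 0)
        + (if k = altRuns σ + 2 then n - 1 - altRuns σ else 0) := by
  have hj : altRuns σ = dirChanges σ + 1 := by unfold altRuns; rw [if_neg (by omega)]
  have hd := dirChanges_le σ
  have hcong : (Finset.univ.filter fun p : Fin (n+1) => altRuns (ins σ p) = k)
      = (Finset.univ.filter fun p : Fin (n+1) => altRuns σ + delta (bw σ) n (p:ℕ) = k) :=
    Finset.filter_congr fun p _ => by rw [altRuns_ins hn σ p]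
  rw [hcong]
  by_cases hk0 : k = altRuns σ
  · have : (Finset.univ.filter fun p : Fin (n+1) => altRuns σ + delta (bw σ) n (p:ℕ) = k)
        = (Finset.univ.filter fun p : Fin (n+1) => delta (bw σ) n (p:ℕ) = 0) :=
      Finset.filter_congr fun p _ => by constructor <;> intro h <;> omega
    rw [this, count_delta_zero hn σ, if_pos hk0, if_neg (by omega), if_neg (by omega)]
    omega
  by_cases hk1 : k = altRuns σ + 1
  · have : (Finset.univ.filter fun p : Fin (n+1) => altRuns σ + delta (bw σ) n (p:ℕ) = k)
        = (Finset.univ.filter fun p : Fin (n+1) => delta (bw σ) n (p:ℕ) = 1) :=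
      Finset.filter_congr fun p _ => by constructor <;> intro h <;> omega
    rw [this, count_delta_one hn σ, if_neg hk0, if_pos hk1, if_neg (by omega)]
  by_cases hk2 : k = altRuns σ + 2
  · have : (Finset.univ.filter fun p : Fin (n+1) => altRuns σ + delta (bw σ) n (p:ℕ) = k)
        = (Finset.univ.filter fun p : Fin (n+1) => delta (bw σ) n (p:ℕ) = 2) :=
      Finset.filter_congr fun p _ => by constructor <;> intro h <;> omega
    rw [this, count_delta_two hn σ, if_neg hk0, if_neg hk1, if_pos hk2]
    omega
  · have : (Finset.univ.filter fun p : Fin (n+1) => altRuns σ + delta (bw σ) n (p:ℕ) = k) = ∅ := by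
      rw [Finset.filter_eq_empty_iff]
      intro p _
      have := delta_le (bw σ) n (p:ℕ)
      omega
    rw [this, if_neg hk0, if_neg hk1, if_neg hk2]
    simp

lemma ins_apply_self {n : ℕ} (σ : Equiv.Perm (Fin n)) (p : Fin (n+1)) :
    ins σ p p = Fin.last n := by
  rw [ins_apply]
  unfold insFun
  rw [Fin.insertNth_apply_same]

lemma ins_apply_succAbove {n : ℕ} (σ : Equiv.Perm (Fin n)) (p : Fin (n+1)) (j : Fin n) :
    ins σ p (p.succAbove j) = (σ j).castSucc := by
  rw [ins_apply]
  unfold insFun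
  rw [Fin.insertNth_apply_succAbove]

lemma ins_bijective {n : ℕ} :
    Function.Bijective (fun x : Equiv.Perm (Fin n) × Fin (n+1) => ins x.1 x.2) := by
  rw [Fintype.bijective_iff_injective_and_card]
  constructor
  · rintro ⟨σ, p⟩ ⟨σ', p'⟩ h
    simp only at h
    have happ : ∀ i, ins σ p i = ins σ' p' i := fun i => by rw [h]
    have hp : p = p' := by
      have h1 : ins σ' p' p = Fin.last n := by
        rw [← happ p]
        exact ins_apply_self σ p
      have h2 : ins σ' p' p' = Fin.last n := ins_apply_self σ' p'
      exact (ins σ' p').injective (h1.trans h2.symm)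
    subst hp
    have hσ : σ = σ' := by
      ext j
      have h1 := happ (p.succAbove j)
      have h2 : ins σ p (p.succAbove j) = (σ j).castSucc := ins_apply_succAbove σ p j
      have h3 : ins σ' p (p.succAbove j) = (σ' j).castSucc := ins_apply_succAbove σ' p j
      have := h2.symm.trans (h1.trans h3)
      exact congrArg Fin.val (Fin.castSucc_inj.mp this)
    rw [hσ]
  · rw [Fintype.card_prod, Fintype.card_perm, Fintype.card_perm, Fintype.card_fin,
      Fintype.card_fin, Nat.factorial_succ, mul_comm]

lemma runNum_succ_sum {n : ℕ} (k : ℕ) :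
    runNum (n+1) k = ∑ σ : Equiv.Perm (Fin n),
      (Finset.univ.filter fun p : Fin (n+1) => altRuns (ins σ p) = k).card := by
  unfold runNum
  have hcard : (Finset.univ.filter fun π : Equiv.Perm (Fin (n+1)) => altRuns π = k).card
      = (Finset.univ.filter fun x : Equiv.Perm (Fin n) × Fin (n+1) =>
          altRuns (ins x.1 x.2) = k).card := by
    refine (Finset.card_bij (fun x _ => ins x.1 x.2) ?_ ?_ ?_).symm
    · intro x hx
      rw [Finset.mem_filter] at hx ⊢
      exact ⟨Finset.mem_univ _, hx.2⟩
    · intro x hx y hy hxy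
      exact ins_bijective.injective hxy
    · intro π hπ
      obtain ⟨x, hx⟩ := ins_bijective.surjective π
      refine ⟨x, ?_, hx⟩
      rw [Finset.mem_filter] at hπ ⊢
      have hx' : ins x.1 x.2 = π := hx
      rw [hx']
      exact ⟨Finset.mem_univ _, hπ.2⟩
  rw [hcard, Finset.card_filter, Fintype.sum_prod_type]
  refine Finset.sum_congr rfl (fun σ _ => ?_)
  rw [Finset.card_filter]

lemma runNum_zero_s1 {n : ℕ} (hn : 2 ≤ n) : runNum n 0 = 0 := by
  unfold runNum
  rw [Finset.card_eq_zero, Finset.filter_eq_empty_iff]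
  intro σ _
  have := altRuns_pos hn σ
  omega

lemma runNum_big_s1 {n k : ℕ} (hn : 2 ≤ n) (hk : n ≤ k) : runNum n k = 0 := by
  unfold runNum
  rw [Finset.card_eq_zero, Finset.filter_eq_empty_iff]
  intro σ _
  have := altRuns_le hn σ
  omega

/-- The fundamental recurrence for the number of permutations by alternating runs. -/
lemma runNum_rec {n : ℕ} (hn : 2 ≤ n) (k : ℕ) :
    runNum (n+1) k = k * runNum n k + 2 * runNum n (k-1) + (n+1-k) * runNum n (k-2) := by
  rw [runNum_succ_sum]
  have hsum : ∀ σ : Equiv.Perm (Fin n),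
      (Finset.univ.filter fun p : Fin (n+1) => altRuns (ins σ p) = k).card
      = (if altRuns σ = k then k else 0) + (if altRuns σ = k-1 ∧ 2 ≤ k then 2 else 0)
        + (if altRuns σ = k-2 ∧ 3 ≤ k then n+1-k else 0) := by
    intro σ
    rw [card_slots hn σ k]
    have h1 := altRuns_pos hn σ
    have h2 := altRuns_le hn σ
    congr 1
    · congr 1
      · by_cases h : k = altRuns σ
        · rw [if_pos h, if_pos (by omega)]
          omega
        · rw [if_neg h, if_neg (by omega)]
      · by_cases h : k = altRuns σ + 1
        · rw [if_pos h, if_pos (by omega)]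
        · rw [if_neg h, if_neg (by omega)]
    · by_cases h : k = altRuns σ + 2
      · rw [if_pos h, if_pos (by omega)]
        omega
      · rw [if_neg h, if_neg (by omega)]
  rw [Finset.sum_congr rfl (fun σ _ => hsum σ), Finset.sum_add_distrib, Finset.sum_add_distrib]
  have e1 : ∑ σ : Equiv.Perm (Fin n), (if altRuns σ = k then k else 0) = k * runNum n k := by
    rw [← Finset.sum_filter]
    unfold runNum
    rw [Finset.sum_const, smul_eq_mul, mul_comm]
  have e2 : ∑ σ : Equiv.Perm (Fin n), (if altRuns σ = k-1 ∧ 2 ≤ k then 2 else 0)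
      = 2 * runNum n (k-1) := by
    by_cases hk : 2 ≤ k
    · have : ∀ σ : Equiv.Perm (Fin n), (if altRuns σ = k-1 ∧ 2 ≤ k then 2 else 0 : ℕ)
          = (if altRuns σ = k-1 then 2 else 0) := fun σ => by
        by_cases h : altRuns σ = k-1
        · rw [if_pos ⟨h, hk⟩, if_pos h]
        · rw [if_neg (fun hc => h hc.1), if_neg h]
      rw [Finset.sum_congr rfl (fun σ _ => this σ), ← Finset.sum_filter]
      unfold runNum
      rw [Finset.sum_const, smul_eq_mul, mul_comm]
    · have hz : runNum n (k-1) = 0 := by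
        rcases Nat.lt_or_ge k 1 with h | h
        · have : k - 1 = 0 := by omega
          rw [this]
          exact runNum_zero_s1 hn
        · have : k - 1 = 0 := by omega
          rw [this]
          exact runNum_zero_s1 hn
      rw [hz, mul_zero, Finset.sum_eq_zero]
      intro σ _
      rw [if_neg (fun hc => hk hc.2)]
  have e3 : ∑ σ : Equiv.Perm (Fin n), (if altRuns σ = k-2 ∧ 3 ≤ k then n+1-k else 0)
      = (n+1-k) * runNum n (k-2) := by
    by_cases hk : 3 ≤ k
    · have : ∀ σ : Equiv.Perm (Fin n), (if altRuns σ = k-2 ∧ 3 ≤ k then n+1-k else 0 : ℕ)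
          = (if altRuns σ = k-2 then n+1-k else 0) := fun σ => by
        by_cases h : altRuns σ = k-2
        · rw [if_pos ⟨h, hk⟩, if_pos h]
        · rw [if_neg (fun hc => h hc.1), if_neg h]
      rw [Finset.sum_congr rfl (fun σ _ => this σ), ← Finset.sum_filter]
      unfold runNum
      rw [Finset.sum_const, smul_eq_mul, mul_comm]
    · have hz : runNum n (k-2) = 0 := by
        have : k - 2 = 0 := by omega
        rw [this]
        exact runNum_zero_s1 hn
      rw [hz, mul_zero, Finset.sum_eq_zero]
      intro σ _
      rw [if_neg (fun hc => hk hc.2)]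
  rw [e1, e2, e3]

lemma coeff_S {n : ℕ} (hn : 2 ≤ n) (m : ℕ) :
    (∑ k ∈ Finset.Icc 1 (n-1), (runNum n k : Polynomial ℝ) * X^k).coeff m = (runNum n m : ℝ) := by
  rw [Polynomial.finset_sum_coeff]
  have hterm : ∀ k ∈ Finset.Icc 1 (n-1), ((runNum n k : Polynomial ℝ) * X^k).coeff m
      = (if k = m then (runNum n k : ℝ) else 0) := by
    intro k _
    rw [← Polynomial.C_eq_natCast, Polynomial.coeff_C_mul, Polynomial.coeff_X_pow]
    by_cases h : m = k
    · rw [if_pos h, if_pos h.symm, mul_one]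
    · rw [if_neg h, if_neg (fun hc => h hc.symm), mul_zero]
  rw [Finset.sum_congr rfl hterm,
    Finset.sum_ite_eq' (Finset.Icc 1 (n-1)) m (fun k => (runNum n k : ℝ))]
  by_cases hm : m ∈ Finset.Icc 1 (n-1)
  · rw [if_pos hm]
  · rw [if_neg hm]
    rw [Finset.mem_Icc] at hm
    have hz : runNum n m = 0 := by
      rcases Nat.lt_or_ge m 1 with h | h
      · rw [show m = 0 from by omega]
        exact runNum_zero_s1 hn
      · exact runNum_big_s1 hn (by omega)
    rw [hz]
    simp

/-- The polynomials defined by `R_1(x) = 1` and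
`R_{n+2}(x) = x(nx+2) R_{n+1}(x) + x(1-x²) R'_{n+1}(x)` satisfy
`R_n(x) = ∑_{k=1}^{n-1} R(n,k) x^k` for `n ≥ 2`, where `R(n,k)` counts the
permutations of `[n]` with `k` alternating runs. -/
theorem stmt1 (R : ℕ → Polynomial ℝ) (hR1 : R 1 = 1)
    (hRrec : ∀ n : ℕ, R (n+2) =
      X * ((n : Polynomial ℝ) * X + 2) * R (n+1) + X * (1 - X^2) * derivative (R (n+1))) :
    ∀ n, 2 ≤ n → R n = ∑ k ∈ Finset.Icc 1 (n-1), (runNum n k : Polynomial ℝ) * X^k := by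
  intro n hn
  induction n, hn using Nat.le_induction with
  | base =>
    have h2 := hRrec 0
    norm_num at h2
    rw [hR1] at h2
    simp at h2
    rw [h2, show (2:ℕ)-1 = 1 from rfl, Finset.Icc_self, Finset.sum_singleton,
      show runNum 2 1 = 2 from by decide]
    push_cast
    ring
  | succ n hn ih =>
    have hrec : R (n+1) = X * ((((n-1:ℕ)) : Polynomial ℝ) * X + 2) * R n
        + X * (1 - X^2) * derivative (R n) := by
      have h := hRrec (n-1)
      rw [show n-1+2 = n+1 from by omega, show n-1+1 = n from by omega] at h
      exact h
    have hS : ∀ t, (∑ k ∈ Finset.Icc 1 (n-1), (runNum n k : Polynomial ℝ) * X^k).coeff t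
        = (runNum n t : ℝ) := coeff_S hn
    rw [hrec, ih]
    ext m
    rw [coeff_S (by omega : 2 ≤ n+1) m]
    have expand : X * ((((n-1:ℕ)) : Polynomial ℝ) * X + 2)
          * (∑ k ∈ Finset.Icc 1 (n-1), (runNum n k : Polynomial ℝ) * X^k)
        + X * (1 - X^2)
          * derivative (∑ k ∈ Finset.Icc 1 (n-1), (runNum n k : Polynomial ℝ) * X^k)
        = Polynomial.C ((n-1:ℕ) : ℝ)
            * ((∑ k ∈ Finset.Icc 1 (n-1), (runNum n k : Polynomial ℝ) * X^k) * X^2)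
          + (((∑ k ∈ Finset.Icc 1 (n-1), (runNum n k : Polynomial ℝ) * X^k) * X^1)
            + ((∑ k ∈ Finset.Icc 1 (n-1), (runNum n k : Polynomial ℝ) * X^k) * X^1))
          + (derivative (∑ k ∈ Finset.Icc 1 (n-1), (runNum n k : Polynomial ℝ) * X^k)) * X^1
          - (derivative (∑ k ∈ Finset.Icc 1 (n-1), (runNum n k : Polynomial ℝ) * X^k)) * X^3 := by
      rw [Polynomial.C_eq_natCast]
      ring
    rw [expand, Polynomial.coeff_sub, Polynomial.coeff_add, Polynomial.coeff_add,
      Polynomial.coeff_add, Polynomial.coeff_C_mul, Polynomial.coeff_mul_X_pow',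
      Polynomial.coeff_mul_X_pow', Polynomial.coeff_mul_X_pow', Polynomial.coeff_mul_X_pow',
      Polynomial.coeff_derivative, Polynomial.coeff_derivative,
      hS, hS, hS, hS]
    match m with
    | 0 =>
      norm_num
      rw [runNum_zero_s1 (by omega : 2 ≤ n+1)]
      norm_num
    | 1 =>
      norm_num
      rw [runNum_rec hn 1]
      norm_num [runNum_zero_s1 hn]
    | 2 =>
      norm_num
      rw [runNum_rec hn 2]
      norm_num [runNum_zero_s1 hn]
      ring
    | (k+3) =>
      have e1 : k+3-2 = k+1 := by omega
      have e2 : k+3-1 = k+2 := by omega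
      have e3 : k+3-3 = k := by omega
      rw [e1, e2, e3, if_pos (by omega : 2 ≤ k+3), if_pos (by omega : 1 ≤ k+3),
        if_pos (by omega : 3 ≤ k+3), runNum_rec hn (k+3)]
      rcases le_or_gt (k+3) (n+1) with h | h
      · push_cast [Nat.cast_sub (by omega : 1 ≤ n)]
        rw [show k+2+1 = k+3 from by omega,
          show ((n - (k+2) : ℕ) : ℝ) = (n:ℝ) - ((k:ℝ) + 2) from by
            rw [Nat.cast_sub (by omega : k + 2 ≤ n)]; push_cast; ring]
        ring
      · have hz : runNum n (k+1) = 0 := runNum_big_s1 hn (by omega)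
        have hz2 : n+1-(k+3) = 0 := by omega
        rw [hz, hz2]
        push_cast [Nat.cast_sub (by omega : 1 ≤ n)]
        rw [show k+2+1 = k+3 from by omega]
        push_cast
        ring
end

section
/- Define W_n(x) by W_1(x) = 1 and W_{n+1}(x) = (nx - x + 2)·W_n(x) + 2x(1-x)·W'_n(x), and define P_n(x) by P_0(x) = x and P_{n+1}(x) = (1+x²)·P'_n(x). Then for n ≥ 2, as an identity of functions for x > 1: W_n(x) = (1/x)·(x-1)^{(n+1)/2}·P_n(1/√(x-1)). -/
open Finset Polynomial

/-- For `n ≥ 2` and `x > 1`: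
`W_n(x) = (1/x)·(x-1)^{(n+1)/2}·P_n(1/√(x-1))`. -/
theorem stmt4 (W : ℕ → Polynomial ℝ) (hW1 : W 1 = 1)
    (hWrec : ∀ n : ℕ, 1 ≤ n → W (n+1) =
      ((n : Polynomial ℝ) * X - X + 2) * W n + 2 * X * (1 - X) * derivative (W n))
    (P : ℕ → Polynomial ℝ) (hP0 : P 0 = X)
    (hPrec : ∀ n : ℕ, P (n+1) = (1 + X^2) * derivative (P n)) :
    ∀ n : ℕ, 2 ≤ n → ∀ x : ℝ, 1 < x →
      (W n).eval x = (1/x) * (x - 1) ^ (((n : ℝ) + 1)/2)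
        * (P n).eval (1 / Real.sqrt (x - 1)) := by
  have key : ∀ m : ℕ, 1 ≤ m → ∀ y : ℝ, 1 < y →
      (W m).eval y = (1/y) * (Real.sqrt (y-1))^(m+1) * (P m).eval (1 / Real.sqrt (y-1)) := by
    intro m hm
    induction m with
    | zero => omega
    | succ k ih =>
      rcases Nat.lt_or_ge k 1 with h1 | hk
      · -- k = 0, base case m = 1
        interval_cases k
        intro y hy
        have hy0 : y ≠ 0 := by positivity
        have hs : 0 < y - 1 := by linarith
        have hr0 : 0 < Real.sqrt (y-1) := Real.sqrt_pos.mpr hs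
        have hr2 : Real.sqrt (y-1) ^ 2 = y - 1 := Real.sq_sqrt hs.le
        have hP1 : P 1 = 1 + X^2 := by
          rw [hPrec 0, hP0, derivative_X, mul_one]
        rw [hW1, hP1]
        simp only [eval_one, eval_add, eval_pow, eval_X]
        rw [show (0:ℕ)+1+1 = 2 from rfl, div_pow, one_pow, hr2]
        field_simp
        ring
      · have IH := ih hk
        intro y hy
        have hy0 : y ≠ 0 := by positivity
        have hs : 0 < y - 1 := by linarith
        set r := Real.sqrt (y - 1) with hrdef
        have hr0 : 0 < r := Real.sqrt_pos.mpr hs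
        have hrne : r ≠ 0 := ne_of_gt hr0
        have hr2 : r ^ 2 = y - 1 := Real.sq_sqrt hs.le
        -- derivative of z ↦ √(z-1)
        have hu : HasDerivAt (fun z : ℝ => Real.sqrt (z - 1)) (1 / (2 * r)) y := by
          have h1 : HasDerivAt (fun z : ℝ => z - 1) 1 y := (hasDerivAt_id y).sub_const 1
          have h2 := (Real.hasDerivAt_sqrt (ne_of_gt hs)).comp y h1
          simpa [hrdef, Function.comp_def] using h2
        have hpow : HasDerivAt (fun z : ℝ => (Real.sqrt (z-1))^(k+1))
            (((k:ℝ)+1) * r^k * (1/(2*r))) y := by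
          have := hu.pow (k+1)
          simpa [Nat.add_sub_cancel, hrdef, Pi.pow_def] using this
        have hinv : HasDerivAt (fun z : ℝ => 1 / Real.sqrt (z-1))
            (-(1/(2*r)) / r^2) y := by
          have := hu.inv hrne
          simpa [one_div, neg_div, hrdef, Pi.inv_def] using this
        have hPe : HasDerivAt (fun z : ℝ => (P k).eval (1 / Real.sqrt (z-1)))
            ((derivative (P k)).eval (1/r) * (-(1/(2*r)) / r^2)) y :=
          by rw [hrdef] at hinv ⊢; exact (Polynomial.hasDerivAt (P k) (1/√(y-1))).comp y hinv
        have hone : HasDerivAt (fun z : ℝ => 1/z) (-(1/y^2)) y := by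
          have := hasDerivAt_inv hy0
          simpa [one_div] using this
        have hg : HasDerivAt
            (fun z : ℝ => (1/z) * (Real.sqrt (z-1))^(k+1) * (P k).eval (1 / Real.sqrt (z-1)))
            (((-(1/y^2)) * r^(k+1) + (1/y) * (((k:ℝ)+1) * r^k * (1/(2*r)))) * ((P k).eval (1/r))
              + (1/y) * r^(k+1) * ((derivative (P k)).eval (1/r) * (-(1/(2*r)) / r^2))) y :=
          (hone.mul hpow).mul hPe
        have hWd : (derivative (W k)).eval y =
            ((-(1/y^2)) * r^(k+1) + (1/y) * (((k:ℝ)+1) * r^k * (1/(2*r)))) * ((P k).eval (1/r))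
              + (1/y) * r^(k+1) * ((derivative (P k)).eval (1/r) * (-(1/(2*r)) / r^2)) := by
          have hev : (fun z : ℝ => (W k).eval z) =ᶠ[nhds y]
              (fun z : ℝ => (1/z) * (Real.sqrt (z-1))^(k+1) * (P k).eval (1 / Real.sqrt (z-1))) :=
            Filter.eventuallyEq_of_mem (Ioi_mem_nhds hy) (fun z hz => IH z hz)
          rw [← Polynomial.deriv, hev.deriv_eq, hg.deriv]
        rw [hWrec k hk, hPrec k]
        simp only [eval_add, eval_mul, eval_sub, eval_natCast, eval_X, eval_one, eval_pow,
          eval_ofNat]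
        rw [IH y hy, hWd]
        rw [← hrdef]
        have hy' : y = r^2 + 1 := by linarith
        rw [hy']
        have hx0 : r^2 + 1 ≠ 0 := by positivity
        field_simp
        ring
  intro n hn x hx
  have hs : (0:ℝ) ≤ x - 1 := by linarith
  have hconv : (x - 1) ^ (((n : ℝ) + 1)/2) = (Real.sqrt (x-1))^(n+1) := by
    rw [Real.sqrt_eq_rpow, ← Real.rpow_natCast ((x-1) ^ ((1:ℝ)/2)) (n+1), ← Real.rpow_mul hs]
    congr 1
    push_cast
    ring
  rw [hconv]
  exact key n (by omega) x hx
end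

section
/- Define R_n(x) by R_1(x) = 1 and R_{n+2}(x) = x(nx+2)·R_{n+1}(x) + x(1-x²)·R'_{n+1}(x), and P_n(x) by P_0(x) = x, P_{n+1}(x) = (1+x²)·P'_n(x). Then for n ≥ 2 and x > 1: R_n(x) = ((x+1)/2)^{n-1}·((x-1)/(x+1))^{(n+1)/2}·P_n(√((x+1)/(x-1))). -/
open Finset Polynomial

set_option maxHeartbeats 1600000 in
theorem keyInd (R : ℕ → Polynomial ℝ) (hR1 : R 1 = 1)
    (hRrec : ∀ n : ℕ, R (n+2) =
      X * ((n : Polynomial ℝ) * X + 2) * R (n+1) + X * (1 - X^2) * derivative (R (n+1)))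
    (P : ℕ → Polynomial ℝ) (hP0 : P 0 = X)
    (hPrec : ∀ n : ℕ, P (n+1) = (1 + X^2) * derivative (P n)) :
    ∀ n : ℕ, ∀ x : ℝ, 1 < x →
      (R (n+2)).eval x = ((x + 1)/2) ^ (n+1)
        * (P (n+2)).eval (Real.sqrt ((x + 1)/(x - 1))) / (Real.sqrt ((x + 1)/(x - 1)))^(n+3) := by
  intro n
  induction n with
  | zero =>
    intro x hx
    have hx1 : x - 1 ≠ 0 := by linarith
    have hupos : 0 < (x+1)/(x-1) := by
      apply div_pos <;> linarith
    set t := Real.sqrt ((x+1)/(x-1)) with ht_def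
    have ht1 : 1 < t := by
      rw [ht_def, show ((x+1)/(x-1)) = ((x+1)/(x-1)) from rfl, Real.lt_sqrt (by norm_num)]
      rw [one_pow, lt_div_iff₀ (by linarith)]; linarith
    have ht2 : t^2 = (x+1)/(x-1) := Real.sq_sqrt hupos.le
    have htx : t^2*(x-1) = x+1 := by rw [ht2]; field_simp
    have h2 : t^2 - 1 ≠ 0 := by nlinarith
    have hxt : x = (t^2+1)/(t^2-1) := by
      rw [eq_div_iff h2]; linear_combination htx
    have hP1 : P 1 = 1 + X^2 := by
      rw [hPrec 0, hP0]; simp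
    have hd1 : derivative (1 + X^2 : Polynomial ℝ) = C 2 * X := by
      rw [derivative_add, derivative_one, derivative_X_pow]; simp
    rw [hRrec 0, hR1, hPrec 1, hP1, hd1]
    simp only [derivative_one, Nat.cast_zero, eval_add, eval_mul, eval_X, eval_ofNat,
      eval_one, eval_sub, eval_pow, eval_zero, mul_zero, zero_mul, mul_one, zero_add,
      eval_natCast, derivative_add, derivative_one, derivative_X_pow, eval_C,
      Nat.cast_ofNat]
    clear_value t
    subst hxt
    have h1 : t ≠ 0 := by positivity
    have h3 : (t^2+1)/(t^2-1) - 1 ≠ 0 := by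
      rw [div_sub_one h2]
      exact div_ne_zero (by ring_nf; norm_num) h2
    have h4 : (t^2+1)/(t^2-1) + 1 ≠ 0 := by
      rw [div_add_one h2]
      have h5 : (0:ℝ) < t^2 - 1 := by nlinarith
      exact div_ne_zero (by positivity) h2
    field_simp
    ring
  | succ n IH =>
    intro x hx
    have hx1 : x - 1 ≠ 0 := by linarith
    have hxp1 : x + 1 ≠ 0 := by linarith
    have hupos : 0 < (x+1)/(x-1) := by apply div_pos <;> linarith
    set t := Real.sqrt ((x+1)/(x-1)) with ht_def
    have ht1 : 1 < t := by
      rw [ht_def, show ((x+1)/(x-1)) = ((x+1)/(x-1)) from rfl, Real.lt_sqrt (by norm_num)]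
      rw [one_pow, lt_div_iff₀ (by linarith)]; linarith
    have h1 : t ≠ 0 := by positivity
    have ht2 : t^2 = (x+1)/(x-1) := Real.sq_sqrt hupos.le
    have htx : t^2*(x-1) = x+1 := by rw [ht2]; field_simp
    have h2 : t^2 - 1 ≠ 0 := by nlinarith
    have hxt : x = (t^2+1)/(t^2-1) := by
      rw [eq_div_iff h2]; linear_combination htx
    -- derivative computation
    have hu : HasDerivAt (fun y : ℝ => (y+1)/(y-1))
        ((1*(x-1) - (x+1)*1)/(x-1)^2) x :=
      ((hasDerivAt_id x).add_const 1).div ((hasDerivAt_id x).sub_const 1) hx1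
    have hs : HasDerivAt (fun y : ℝ => Real.sqrt ((y+1)/(y-1)))
        (1/(2*Real.sqrt ((x+1)/(x-1))) * ((1*(x-1) - (x+1)*1)/(x-1)^2)) x :=
      (Real.hasDerivAt_sqrt hupos.ne').comp x hu
    rw [← ht_def] at hs
    have hq : HasDerivAt (fun y : ℝ => (P (n+2)).eval (Real.sqrt ((y+1)/(y-1))))
        ((derivative (P (n+2))).eval t * (1/(2*t) * ((1*(x-1) - (x+1)*1)/(x-1)^2))) x :=
      HasDerivAt.comp (h₂ := fun y => (P (n+2)).eval y) x (Polynomial.hasDerivAt (p := P (n+2)) t) hs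
    have hA : HasDerivAt (fun y : ℝ => ((y+1)/2)^(n+1))
        (((n+1:ℕ):ℝ) * ((x+1)/2)^(n+1-1) * (1/2)) x :=
      (((hasDerivAt_id x).add_const 1).div_const 2).pow (n+1)
    have hnum := hA.mul hq
    have hden : HasDerivAt (fun y : ℝ => (Real.sqrt ((y+1)/(y-1)))^(n+3))
        (((n+3:ℕ):ℝ) * t^(n+3-1) * (1/(2*t) * ((1*(x-1) - (x+1)*1)/(x-1)^2))) x :=
      hs.pow (n+3)
    have hg := hnum.div hden (pow_ne_zero _ h1)
    have hev : (fun y : ℝ => (R (n+2)).eval y) =ᶠ[nhds x]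
        (fun y : ℝ => ((y+1)/2)^(n+1) * (P (n+2)).eval (Real.sqrt ((y+1)/(y-1)))
          / (Real.sqrt ((y+1)/(y-1)))^(n+3)) := by
      filter_upwards [Ioi_mem_nhds hx] with y hy
      exact IH y hy
    have hRd := hg.congr_of_eventuallyEq hev
    have hD := (Polynomial.hasDerivAt (p := R (n+2)) x).unique hRd
    simp only [Pi.mul_apply] at hD
    rw [← ht_def] at hD
    rw [hRrec (n+1)]
    simp only [eval_add, eval_mul, eval_X, eval_ofNat, eval_one, eval_sub, eval_pow,
      eval_natCast, Nat.cast_add, Nat.cast_one]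
    rw [IH x hx, hD, hPrec (n+2)]
    simp only [eval_mul, eval_add, eval_one, eval_pow, eval_X]
    rw [← ht_def]
    set q := (P (n+2)).eval t
    set dq := (derivative (P (n+2))).eval t with hdq_def
    clear_value t q dq
    subst hxt
    have h3 : (t^2+1)/(t^2-1) - 1 ≠ 0 := by
      rw [div_sub_one h2]
      exact div_ne_zero (by ring_nf; norm_num) h2
    have h4 : (t^2+1)/(t^2-1) + 1 ≠ 0 := by
      rw [div_add_one h2]
      have h5 : (0:ℝ) < t^2 - 1 := by nlinarith
      exact div_ne_zero (by positivity) h2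
    simp only [Nat.add_sub_cancel, show n + 3 - 1 = n + 2 from rfl]
    push_cast
    field_simp
    simp only [div_pow]
    field_simp
    ring


/-- For `n ≥ 2` and `x > 1`:
`R_n(x) = ((x+1)/2)^{n-1}·((x-1)/(x+1))^{(n+1)/2}·P_n(√((x+1)/(x-1)))`. -/
theorem stmt5 (R : ℕ → Polynomial ℝ) (hR1 : R 1 = 1)
    (hRrec : ∀ n : ℕ, R (n+2) =
      X * ((n : Polynomial ℝ) * X + 2) * R (n+1) + X * (1 - X^2) * derivative (R (n+1)))
    (P : ℕ → Polynomial ℝ) (hP0 : P 0 = X)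
    (hPrec : ∀ n : ℕ, P (n+1) = (1 + X^2) * derivative (P n)) :
    ∀ n : ℕ, 2 ≤ n → ∀ x : ℝ, 1 < x →
      (R n).eval x = ((x + 1)/2) ^ (n - 1) * ((x - 1)/(x + 1)) ^ (((n : ℝ) + 1)/2)
        * (P n).eval (Real.sqrt ((x + 1)/(x - 1))) := by
  intro n hn x hx
  obtain ⟨k, rfl⟩ : ∃ k, n = k + 2 := ⟨n - 2, by omega⟩
  have hx1 : x - 1 ≠ 0 := by linarith
  have hupos : 0 < (x+1)/(x-1) := by apply div_pos <;> linarith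
  set t := Real.sqrt ((x+1)/(x-1)) with ht_def
  have ht0 : 0 < t := Real.sqrt_pos.mpr hupos
  have ht2 : t^2 = (x+1)/(x-1) := Real.sq_sqrt hupos.le
  have hxx : (x-1)/(x+1) = (t⁻¹)^(2:ℕ) := by
    rw [inv_pow, ht2, inv_div]
  have hrpow : ((x-1)/(x+1)) ^ ((((k+2:ℕ) : ℝ) + 1)/2) = (t⁻¹)^(k+3 : ℕ) := by
    rw [hxx, ← Real.rpow_natCast t⁻¹ 2, ← Real.rpow_mul (by positivity)]
    rw [show ((2:ℕ):ℝ) * ((((k+2:ℕ) : ℝ) + 1)/2) = ((k+3 : ℕ) : ℝ) by push_cast; ring]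
    exact Real.rpow_natCast _ _
  rw [hrpow, keyInd R hR1 hRrec P hP0 hPrec k x hx, ← ht_def]
  rw [show k + 2 - 1 = k + 1 from rfl, inv_pow]
  field_simp
end

section
/- Define R_n(x) by R_1(x) = 1, R_{n+2}(x) = x(nx+2)·R_{n+1}(x) + x(1-x²)·R'_{n+1}(x), and W_n(x) by W_1(x) = 1, W_{n+1}(x) = (nx - x + 2)·W_n(x) + 2x(1-x)·W'_n(x). Then for all n ≥ 2: R_n(x) = (x·(1+x)^{n-2} / 2^{n-2}) · W_n(2x/(1+x)), as an identity of rational functions (equivalently, 2^{n-2}·R_n(x) = x·(1+x)^{n-2}·W_n(2x/(1+x)) for all x ≠ -1). -/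
open Finset Polynomial

/-- For `n ≥ 2` and all `x ≠ -1`:
`2^{n-2}·R_n(x) = x·(1+x)^{n-2}·W_n(2x/(1+x))`. -/
theorem stmt6 (R : ℕ → Polynomial ℝ) (hR1 : R 1 = 1)
    (hRrec : ∀ n : ℕ, R (n+2) =
      X * ((n : Polynomial ℝ) * X + 2) * R (n+1) + X * (1 - X^2) * derivative (R (n+1)))
    (W : ℕ → Polynomial ℝ) (hW1 : W 1 = 1)
    (hWrec : ∀ n : ℕ, 1 ≤ n → W (n+1) =
      ((n : Polynomial ℝ) * X - X + 2) * W n + 2 * X * (1 - X) * derivative (W n)) :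
    ∀ n : ℕ, 2 ≤ n → ∀ x : ℝ, x ≠ -1 →
      2 ^ (n - 2) * (R n).eval x
        = x * (1 + x) ^ (n - 2) * (W n).eval (2 * x / (1 + x)) := by
  have key : ∀ m : ℕ, ∀ x : ℝ, x ≠ -1 →
      2 ^ m * (R (m+2)).eval x
        = x * (1 + x) ^ m * (W (m+2)).eval (2 * x / (1 + x)) := by
    intro m
    induction m with
    | zero =>
      intro x hx
      have ht : (1:ℝ) + x ≠ 0 := fun h => hx (by linarith)
      rw [hRrec 0, hWrec 1 le_rfl, hR1, hW1]
      simp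
    | succ m IH =>
      intro x hx
      have ht : (1:ℝ) + x ≠ 0 := fun h => hx (by linarith)
      -- derivative of the inner map y ↦ 2y/(1+y)
      have hu : HasDerivAt (fun y : ℝ => 2*y/(1+y)) (2/(1+x)^2) x := by
        have h1 : HasDerivAt (fun y : ℝ => 2*y) 2 x := by
          simpa using (hasDerivAt_id x).const_mul (2:ℝ)
        have h2 : HasDerivAt (fun y : ℝ => 1+y) 1 x := by
          simpa using (hasDerivAt_id x).const_add (1:ℝ)
        have := h1.div h2 ht
        refine this.congr_deriv ?_
        ring
      have hWd : HasDerivAt (fun y : ℝ => (W (m+2)).eval (2*y/(1+y)))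
          ((derivative (W (m+2))).eval (2*x/(1+x)) * (2/(1+x)^2)) x :=
        by have := (Polynomial.hasDerivAt (W (m+2)) (2*x/(1+x))).comp x hu; exact this
      have hpow : HasDerivAt (fun y : ℝ => y * (1+y)^m)
          (1 * (1+x)^m + x * ((m : ℝ) * (1+x)^(m-1) * 1)) x :=
        (hasDerivAt_id x).mul (((hasDerivAt_id x).const_add (1:ℝ)).pow m)
      have hG : HasDerivAt (fun y : ℝ => y * (1+y)^m * (W (m+2)).eval (2*y/(1+y)) / 2^m)
          (((1 * (1+x)^m + x * ((m : ℝ) * (1+x)^(m-1) * 1)) * (W (m+2)).eval (2*x/(1+x))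
            + x * (1+x)^m * ((derivative (W (m+2))).eval (2*x/(1+x)) * (2/(1+x)^2))) / 2^m) x :=
        (hpow.mul hWd).div_const _
      have heq : (fun y : ℝ => (R (m+2)).eval y)
          =ᶠ[nhds x] (fun y : ℝ => y * (1+y)^m * (W (m+2)).eval (2*y/(1+y)) / 2^m) := by
        have hmem : {(-1 : ℝ)}ᶜ ∈ nhds x := isOpen_compl_singleton.mem_nhds hx
        filter_upwards [hmem] with y hy
        have h := IH y hy
        have h2 : (2:ℝ)^m ≠ 0 := by positivity
        rw [eq_div_iff h2]
        linarith
      have hder : (derivative (R (m+2))).eval x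
          = ((1 * (1+x)^m + x * ((m : ℝ) * (1+x)^(m-1) * 1)) * (W (m+2)).eval (2*x/(1+x))
            + x * (1+x)^m * ((derivative (W (m+2))).eval (2*x/(1+x)) * (2/(1+x)^2))) / 2^m :=
        (Polynomial.hasDerivAt (R (m+2)) x).unique (hG.congr_of_eventuallyEq heq)
      have hA : (R (m+2)).eval x
          = x * (1 + x) ^ m * (W (m+2)).eval (2 * x / (1 + x)) / 2^m := by
        have h2 : (2:ℝ)^m ≠ 0 := by positivity
        rw [eq_div_iff h2]
        linarith [IH x hx]
      have hR' := hRrec (m+1)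
      have hW' := hWrec (m+2) (by omega)
      rw [show m+1+2 = m+1+1+1 from rfl] at hW'
      rw [show m+1+2 = (m+1)+2 from rfl, hR', show m+1+1+1 = m+1+2 from rfl] at *
      rw [hW']
      simp only [eval_add, eval_mul, eval_sub, eval_pow, eval_X, eval_ofNat, eval_natCast,
        eval_one, hder, hA]
      push_cast
      rcases m with _ | k
      · field_simp
        ring
      · have hpow1 : (1+x)^(k+1) = (1+x)^k * (1+x) := pow_succ _ _
        have hpow2 : (1+x)^(k+1+1) = (1+x)^k * (1+x) * (1+x) := by ring
        simp only [Nat.add_sub_cancel] at *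
        field_simp
        ring
  intro n hn x hx
  obtain ⟨m, rfl⟩ : ∃ m, n = m + 2 := ⟨n - 2, by omega⟩
  simpa using key m x hx
end

section
/- Define T_n(x) by T_0(x) = 1, T_1(x) = x, and T_{n+1}(x) = x(nx+1)·T_n(x) + x(1-x²)·T'_n(x). Then T_n(x) = Σ_{k=1}^n a_k(n)·x^k for n ≥ 1, where a_k(n) satisfies a_k(n) = k·a_k(n-1) + a_{k-1}(n-1) + (n-k+1)·a_{k-2}(n-1) with a_0(0) = a_1(1) = 1 and a_k(0) = a_0(n) = 0 for n,k ≥ 1. -/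
open Finset Polynomial

/-- `a_k(n)` (written `arec n k`), defined by the recurrence
`a_k(n) = k·a_k(n-1) + a_{k-1}(n-1) + (n-k+1)·a_{k-2}(n-1)` with
`a_0(0) = a_1(1) = 1` and `a_k(0) = a_0(n) = 0` for `n,k ≥ 1`
(terms with a negative index being zero). -/
def arec : ℕ → ℕ → ℕ
  | 0, 0 => 1
  | 0, _+1 => 0
  | _+1, 0 => 0
  | n+1, k+1 => (k+1) * arec n (k+1) + arec n k
      + (n + 1 - k) * (if 1 ≤ k then arec n (k-1) else 0)

lemma arec_eq_zero : ∀ n k : ℕ, n < k → arec n k = 0 := by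
  intro n
  induction n with
  | zero => intro k hk; match k, hk with | (k+1), _ => rfl
  | succ n ih =>
    intro k hk
    match k, hk with
    | (k+1), hk =>
      have h1 : arec n (k+1) = 0 := ih _ (by omega)
      have h2 : arec n k = 0 := ih _ (by omega)
      have h3 : n + 1 - k = 0 := by omega
      simp [arec, h1, h2, h3]

lemma arec_key (T : ℕ → Polynomial ℝ) (hT0 : T 0 = 1)
    (hTrec : ∀ n : ℕ, T (n+1) =
      X * ((n : Polynomial ℝ) * X + 1) * T n + X * (1 - X^2) * derivative (T n)) :
    ∀ n, T n = ∑ k ∈ Finset.range (n+1), (arec n k : Polynomial ℝ) * X^k := by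
  intro n
  induction n with
  | zero => simp [hT0, arec]
  | succ n ih =>
    rw [hTrec, ih]
    have hder : derivative (∑ k ∈ Finset.range (n+1), (arec n k : Polynomial ℝ) * X^k)
        = ∑ k ∈ Finset.range (n+1), (arec n k : Polynomial ℝ) * ((k : Polynomial ℝ) * X^(k-1)) := by
      rw [derivative_sum]
      refine Finset.sum_congr rfl fun k _ => ?_
      rw [derivative_mul, derivative_natCast, derivative_X_pow]
      simp [mul_comm]
    rw [hder, Finset.mul_sum, Finset.mul_sum, ← Finset.sum_add_distrib]
    -- LHS termwise
    have hterm : ∀ k ∈ Finset.range (n+1),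
        X * ((n : Polynomial ℝ) * X + 1) * ((arec n k : Polynomial ℝ) * X^k)
        + X * (1 - X^2) * ((arec n k : Polynomial ℝ) * ((k : Polynomial ℝ) * X^(k-1)))
        = (arec n k : Polynomial ℝ) *
            ((k : Polynomial ℝ) * X^k + X^(k+1) + ((n - k : ℕ) : Polynomial ℝ) * X^(k+2)) := by
      intro k hk
      have hkn : k ≤ n := by simpa [Nat.lt_succ_iff] using hk
      have hXd : X * ((k : Polynomial ℝ) * X^(k-1)) = (k : Polynomial ℝ) * X^k := by
        cases k with
        | zero => simp
        | succ m => simp only [Nat.add_sub_cancel]; rw [pow_succ]; ring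
      have hcast : ((n - k : ℕ) : Polynomial ℝ) = (n : Polynomial ℝ) - (k : Polynomial ℝ) := by
        push_cast [Nat.cast_sub hkn]; ring
      rw [hcast]
      have expand : X * (1 - X^2) * ((arec n k : Polynomial ℝ) * ((k : Polynomial ℝ) * X^(k-1)))
          = (1 - X^2) * ((arec n k : Polynomial ℝ) * ((k : Polynomial ℝ) * X^k)) := by
        calc X * (1 - X^2) * ((arec n k : Polynomial ℝ) * ((k : Polynomial ℝ) * X^(k-1)))
            = (1 - X^2) * ((arec n k : Polynomial ℝ) * (X * ((k : Polynomial ℝ) * X^(k-1)))) := by ring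
          _ = (1 - X^2) * ((arec n k : Polynomial ℝ) * ((k : Polynomial ℝ) * X^k)) := by rw [hXd]
      rw [expand, pow_succ, pow_add]
      ring
    rw [Finset.sum_congr rfl hterm]
    -- Now transform RHS
    have hRHS : ∑ k ∈ Finset.range (n+2), (arec (n+1) k : Polynomial ℝ) * X^k
        = ∑ k ∈ Finset.range (n+1), (arec n k : Polynomial ℝ) *
            ((k : Polynomial ℝ) * X^k + X^(k+1) + ((n - k : ℕ) : Polynomial ℝ) * X^(k+2)) := by
      rw [Finset.sum_range_succ' (fun k => (arec (n+1) k : Polynomial ℝ) * X^k) (n+1)]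
      have h0 : (arec (n+1) 0 : Polynomial ℝ) * X^0 = 0 := by
        have : arec (n+1) 0 = 0 := rfl
        simp [this]
      rw [h0, add_zero]
      have hA : ∀ k, ((arec (n+1) (k+1) : ℕ) : Polynomial ℝ) * X^(k+1)
          = ((k+1 : ℕ) : Polynomial ℝ) * (arec n (k+1) : Polynomial ℝ) * X^(k+1)
            + (arec n k : Polynomial ℝ) * X^(k+1)
            + ((n+1-k : ℕ) : Polynomial ℝ) *
              ((if 1 ≤ k then arec n (k-1) else 0 : ℕ) : Polynomial ℝ) * X^(k+1) := by
        intro k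
        show ((((k+1) * arec n (k+1) + arec n k
          + (n + 1 - k) * (if 1 ≤ k then arec n (k-1) else 0) : ℕ)) : Polynomial ℝ) * X^(k+1) = _
        push_cast
        ring
      rw [Finset.sum_congr rfl (fun k _ => hA k), Finset.sum_add_distrib,
        Finset.sum_add_distrib]
      -- S1
      have hS1 : ∑ k ∈ Finset.range (n+1),
            ((k+1 : ℕ) : Polynomial ℝ) * (arec n (k+1) : Polynomial ℝ) * X^(k+1)
          = ∑ k ∈ Finset.range (n+1),
            ((k : ℕ) : Polynomial ℝ) * (arec n k : Polynomial ℝ) * X^k := by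
        have e1 := Finset.sum_range_succ'
          (fun j => ((j : ℕ) : Polynomial ℝ) * (arec n j : Polynomial ℝ) * X^j) (n+1)
        have e2 := Finset.sum_range_succ
          (fun j => ((j : ℕ) : Polynomial ℝ) * (arec n j : Polynomial ℝ) * X^j) (n+1)
        have htop : arec n (n+1) = 0 := arec_eq_zero n (n+1) (by omega)
        have e3 := e1.symm.trans e2
        simpa [htop] using e3
      -- S3
      have hS3 : ∑ k ∈ Finset.range (n+1),
            ((n+1-k : ℕ) : Polynomial ℝ) *
              ((if 1 ≤ k then arec n (k-1) else 0 : ℕ) : Polynomial ℝ) * X^(k+1)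
          = ∑ k ∈ Finset.range (n+1),
            ((n - k : ℕ) : Polynomial ℝ) * (arec n k : Polynomial ℝ) * X^(k+2) := by
        have e1 := Finset.sum_range_succ'
          (fun k => ((n+1-k : ℕ) : Polynomial ℝ) *
            ((if 1 ≤ k then arec n (k-1) else 0 : ℕ) : Polynomial ℝ) * X^(k+1)) n
        have e2 := Finset.sum_range_succ
          (fun k => ((n - k : ℕ) : Polynomial ℝ) * (arec n k : Polynomial ℝ) * X^(k+2)) n
        rw [e1, e2]
        have hz1 : ((if (1:ℕ) ≤ 0 then arec n (0-1) else 0 : ℕ) : Polynomial ℝ) = 0 := by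
          norm_num
        have hz2 : ((n - n : ℕ) : Polynomial ℝ) = 0 := by simp
        rw [hz1, hz2]
        simp only [mul_zero, zero_mul, add_zero]
        refine Finset.sum_congr rfl fun k hk => ?_
        have h1 : n + 1 - (k+1) = n - k := by omega
        have h2 : (1:ℕ) ≤ k + 1 := by omega
        simp [h1, h2]
      rw [hS1, hS3, ← Finset.sum_add_distrib, ← Finset.sum_add_distrib]
      exact Finset.sum_congr rfl fun k _ => by ring
    rw [hRHS]

/-- The polynomials defined by `T_0 = 1`, `T_1 = x`, and
`T_{n+1}(x) = x(nx+1) T_n(x) + x(1-x²) T'_n(x)` satisfy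
`T_n(x) = ∑_{k=1}^n a_k(n) x^k` for `n ≥ 1`. -/
theorem stmt9 (T : ℕ → Polynomial ℝ) (hT0 : T 0 = 1) (hT1 : T 1 = X)
    (hTrec : ∀ n : ℕ, T (n+1) =
      X * ((n : Polynomial ℝ) * X + 1) * T n + X * (1 - X^2) * derivative (T n)) :
    ∀ n, 1 ≤ n → T n = ∑ k ∈ Finset.Icc 1 n, (arec n k : Polynomial ℝ) * X^k := by
  intro n hn
  rw [arec_key T hT0 hTrec n]
  have : Finset.range (n+1) = insert 0 (Finset.Icc 1 n) := by
    ext x; simp [Nat.lt_succ_iff]; omega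
  rw [this, Finset.sum_insert (by simp)]
  match n, hn with
  | (m+1), _ => simp [arec]
end

section
/- Define T_n(x) by T_0(x) = 1, T_1(x) = x, T_{n+1}(x) = x(nx+1)·T_n(x) + x(1-x²)·T'_n(x), and W_n(x) by W_1(x) = 1, W_{n+1}(x) = (nx-x+2)·W_n(x) + 2x(1-x)·W'_n(x). Then for all n ≥ 1 and x ≠ -1: 2^{n-1}·T_n(x) = x·(1+x)^{n-1}·W_n(2x/(1+x)). -/
open Finset Polynomial

/-- For `n ≥ 1` and `x ≠ -1`: `2^{n-1}·T_n(x) = x·(1+x)^{n-1}·W_n(2x/(1+x))`. -/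
theorem stmt10 (T : ℕ → Polynomial ℝ) (hT0 : T 0 = 1) (hT1 : T 1 = X)
    (hTrec : ∀ n : ℕ, T (n+1) =
      X * ((n : Polynomial ℝ) * X + 1) * T n + X * (1 - X^2) * derivative (T n))
    (W : ℕ → Polynomial ℝ) (hW1 : W 1 = 1)
    (hWrec : ∀ n : ℕ, 1 ≤ n → W (n+1) =
      ((n : Polynomial ℝ) * X - X + 2) * W n + 2 * X * (1 - X) * derivative (W n)) :
    ∀ n : ℕ, 1 ≤ n → ∀ x : ℝ, x ≠ -1 →
      2 ^ (n - 1) * (T n).eval x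
        = x * (1 + x) ^ (n - 1) * (W n).eval (2 * x / (1 + x)) := by
  suffices key : ∀ m : ℕ, ∀ x : ℝ, x ≠ -1 →
      2 ^ m * (T (m+1)).eval x
        = x * (1 + x) ^ m * (W (m+1)).eval (2 * x / (1 + x)) by
    intro n hn x hx
    obtain ⟨m, rfl⟩ : ∃ m, n = m + 1 :=
      ⟨n - 1, (Nat.succ_pred_eq_of_pos hn).symm⟩
    simpa using key m x hx
  intro m
  induction m with
  | zero =>
    intro x hx
    simp [hT1, hW1]
  | succ m IH =>
    intro x hx
    have hy : (1:ℝ) + x ≠ 0 := by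
      intro h; apply hx; linarith
    have hu : (2 * x / (1 + x)) * (1 + x) = 2 * x := div_mul_cancel₀ _ hy
    have hA : (2:ℝ) ^ m * (T (m+1)).eval x
        = x * (1 + x) ^ m * (W (m+1)).eval (2 * x / (1 + x)) := IH x hx
    -- derivative of (1+z)^m
    obtain ⟨e, he_deriv, he⟩ : ∃ e : ℝ, HasDerivAt (fun z : ℝ => (1+z)^m) e x ∧
        e * (1 + x) = (m : ℝ) * (1 + x) ^ m := by
      cases m with
      | zero =>
        exact ⟨0, by simpa using hasDerivAt_const x (1:ℝ), by simp⟩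
      | succ k =>
        refine ⟨((k:ℝ)+1) * (1+x)^k, ?_, ?_⟩
        · have h := ((hasDerivAt_id x).const_add (1:ℝ)).pow (k+1)
          refine HasDerivAt.congr_deriv h ?_
          simp only [id_eq, Nat.add_sub_cancel]
          push_cast
          ring
        · push_cast
          ring
    -- derivative of 2z/(1+z)
    obtain ⟨d, hd_deriv, hd2⟩ : ∃ d : ℝ, HasDerivAt (fun z : ℝ => 2*z/(1+z)) d x ∧
        d * (1 + x)^2 = 2 := by
      refine ⟨_, ((hasDerivAt_id x).const_mul 2).div ((hasDerivAt_id x).const_add 1) hy, ?_⟩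
      field_simp
      simp
    -- derivative of z ↦ (W (m+1)).eval (2z/(1+z))
    have hw : HasDerivAt (fun z : ℝ => (W (m+1)).eval (2*z/(1+z)))
        ((derivative (W (m+1))).eval (2 * x / (1 + x)) * d) x := by
      have h := ((W (m+1)).hasDerivAt (2 * x / (1 + x))).comp x hd_deriv
      exact h
    have hR : HasDerivAt (fun z : ℝ => z * (1+z)^m * (W (m+1)).eval (2*z/(1+z)))
        ((1 * (1+x)^m + x * e) * (W (m+1)).eval (2 * x / (1 + x))
          + x * (1+x)^m * ((derivative (W (m+1))).eval (2 * x / (1 + x)) * d)) x :=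
      ((hasDerivAt_id' x).mul he_deriv).mul hw
    have hL : HasDerivAt (fun z : ℝ => (2:ℝ)^m * (T (m+1)).eval z)
        ((2:ℝ)^m * (derivative (T (m+1))).eval x) x :=
      HasDerivAt.const_mul ((2:ℝ)^m) ((T (m+1)).hasDerivAt x)
    have hderiv_eq : deriv (fun z : ℝ => (2:ℝ)^m * (T (m+1)).eval z) x
        = deriv (fun z : ℝ => z * (1+z)^m * (W (m+1)).eval (2*z/(1+z))) x := by
      apply Filter.EventuallyEq.deriv_eq
      have hmem : {z : ℝ | z ≠ -1} ∈ nhds x := isOpen_ne.mem_nhds hx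
      filter_upwards [hmem] with z hz using IH z hz
    have hBraw : (2:ℝ)^m * (derivative (T (m+1))).eval x
        = (1 * (1+x)^m + x * e) * (W (m+1)).eval (2 * x / (1 + x))
          + x * (1+x)^m * ((derivative (W (m+1))).eval (2 * x / (1 + x)) * d) := by
      rw [← hL.deriv, hderiv_eq, hR.deriv]
    -- expand the recurrences
    have expandT : (T (m+1+1)).eval x
        = x * (((m:ℝ)+1) * x + 1) * (T (m+1)).eval x
          + x * (1 - x^2) * (derivative (T (m+1))).eval x := by
      rw [hTrec (m+1)]
      simp only [eval_add, eval_mul, eval_sub, eval_pow, eval_X, eval_one, eval_natCast]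
      push_cast
      ring
    have expandW : (W (m+1+1)).eval (2 * x / (1 + x))
        = (((m:ℝ)+1) * (2 * x / (1 + x)) - (2 * x / (1 + x)) + 2)
            * (W (m+1)).eval (2 * x / (1 + x))
          + 2 * (2 * x / (1 + x)) * (1 - (2 * x / (1 + x)))
            * (derivative (W (m+1))).eval (2 * x / (1 + x)) := by
      rw [hWrec (m+1) (Nat.le_add_left 1 m)]
      simp only [eval_add, eval_mul, eval_sub, eval_X, eval_one, eval_natCast, eval_ofNat]
      push_cast
      ring
    have key2 : (1+x)^2 * ((2:ℝ)^(m+1) * (T (m+1+1)).eval x)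
        = (1+x)^2 * (x * (1 + x)^(m+1) * (W (m+1+1)).eval (2 * x / (1 + x))) := by
      rw [expandT, expandW]
      linear_combination
        (2*x*(((m:ℝ)+1)*x+1)*(1+x)^2) * hA
        + (2*x*(1-x^2)*(1+x)^2) * hBraw
        + (2*x^2*(1-x)*(1+x)^2 * (W (m+1)).eval (2 * x / (1 + x))) * he
        + (2*x^2*(1-x)*(1+x)*(1+x)^m
            * (derivative (W (m+1))).eval (2 * x / (1 + x))) * hd2
        + ((-(x*(1+x)^m*(1+x)^2*(m:ℝ))) * (W (m+1)).eval (2 * x / (1 + x))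
            + (-(2*x*(1+x)^m*(1+x)^2)
               + 2*x*(1+x)^m*(1+x)*((2 * x / (1 + x))*(1+x)+2*x))
              * (derivative (W (m+1))).eval (2 * x / (1 + x))) * hu
    exact mul_left_cancel₀ (pow_ne_zero 2 hy) key2
end

section
/- Consider the context-free grammar G = {x → xy, y → xy} with formal derivative D (a derivation on the polynomial ring in x, y satisfying D(x) = xy and D(y) = xy). Then for all n ≥ 1, D^n(x) = x·Σ_{k=0}^{n-1} A(n,k)·x^k·y^{n-k}, where A(n,k) is the Eulerian number counting permutations of [n] with k descents. -/
open Finset Polynomial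

/-- number of descents of `π` -/
def descents {n : ℕ} (π : Equiv.Perm (Fin n)) : ℕ :=
  ((Finset.range (n - 1)).filter (fun i => pval π (i+1) < pval π i)).card

/-- Eulerian number `A(n,k)`: the number of permutations of `[n]` with `k` descents -/
def eulerianNum (n k : ℕ) : ℕ :=
  (Finset.univ.filter (fun π : Equiv.Perm (Fin n) => descents π = k)).card

namespace EulerAux

variable {n : ℕ}

/-- insert the max value `n` (0-based) at position `j` -/
def ins (σ : Equiv.Perm (Fin n)) (j : Fin (n+1)) : Equiv.Perm (Fin (n+1)) :=
  (finSuccEquiv' j).trans ((Equiv.optionCongr σ).trans (finSuccEquiv' (Fin.last n)).symm)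

lemma ins_apply_self (σ : Equiv.Perm (Fin n)) (j : Fin (n+1)) : ins σ j j = Fin.last n := by
  simp [ins, finSuccEquiv'_at, finSuccEquiv'_symm_none]

lemma ins_apply_succAbove (σ : Equiv.Perm (Fin n)) (j : Fin (n+1)) (i : Fin n) :
    ins σ j (j.succAbove i) = (σ i).castSucc := by
  simp [ins, finSuccEquiv'_succAbove, finSuccEquiv'_symm_some, Fin.succAbove_last]

lemma pval_le (σ : Equiv.Perm (Fin n)) (a : ℕ) : pval σ a ≤ n := by
  unfold pval; split
  · exact Nat.succ_le_of_lt (Fin.is_lt _)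
  · exact Nat.zero_le _

lemma pval_pos (σ : Equiv.Perm (Fin n)) {a : ℕ} (h : a < n) : 0 < pval σ a := by
  unfold pval; rw [dif_pos h]; exact Nat.succ_pos _

lemma pval_ins (σ : Equiv.Perm (Fin n)) (j : Fin (n+1)) (a : ℕ) (ha : a < n + 1) :
    pval (ins σ j) a =
      if a = j.val then n + 1 else if a < j.val then pval σ a else pval σ (a - 1) := by
  by_cases hj : a = j.val
  · have : (⟨a, ha⟩ : Fin (n+1)) = j := Fin.ext hj
    rw [if_pos hj]
    unfold pval
    rw [dif_pos ha, this, ins_apply_self]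
    simp [Fin.last]
  · rw [if_neg hj]
    have hne : (⟨a, ha⟩ : Fin (n+1)) ≠ j := fun h => hj (by rw [← h])
    obtain ⟨i, hi⟩ := Fin.exists_succAbove_eq hne
    have happ : ins σ j ⟨a, ha⟩ = (σ i).castSucc := by rw [← hi, ins_apply_succAbove]
    have hival : (i : ℕ) = if a < j.val then a else a - 1 := by
      by_cases h : i.castSucc < j
      · have hs := Fin.succAbove_of_castSucc_lt j i h
        rw [hs] at hi
        have hai : a = (i : ℕ) := by
          have := congrArg Fin.val hi; simpa using this.symm
        have hlt : a < j.val := by rw [hai]; exact h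
        rw [if_pos hlt, hai]
      · push_neg at h
        have hs := Fin.succAbove_of_le_castSucc j i h
        rw [hs] at hi
        have hai : a = (i : ℕ) + 1 := by
          have := congrArg Fin.val hi; simpa using this.symm
        have hjle : (j : ℕ) ≤ (i : ℕ) := h
        have hnlt : ¬ a < j.val := by omega
        rw [if_neg hnlt, hai]; omega
    have hp : pval (ins σ j) a = (σ i : ℕ) + 1 := by
      unfold pval; rw [dif_pos ha, happ]; rfl
    have hlt2 : (if a < j.val then a else a - 1) < n := i.is_lt.trans_eq' (by rw [hival])
    have hp2 : pval σ (if a < j.val then a else a - 1) = (σ i : ℕ) + 1 := by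
      unfold pval; rw [dif_pos hlt2]
      congr 2
      exact Fin.ext (by simp [← hival])
    rw [← apply_ite (pval σ) (a < (j:ℕ)) a (a-1), hp2, hp]


/-- descent indicator -/
def F (σ : Equiv.Perm (Fin n)) (i : ℕ) : ℕ := if pval σ (i+1) < pval σ i then 1 else 0

lemma descents_eq (σ : Equiv.Perm (Fin n)) : descents σ = ∑ i ∈ range (n-1), F σ i :=
  Finset.card_filter _ _

def good (σ : Equiv.Perm (Fin n)) (j : Fin (n+1)) : Prop :=
  (j : ℕ) = n ∨ (0 < (j:ℕ) ∧ pval σ (j:ℕ) < pval σ ((j:ℕ) - 1))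

instance (σ : Equiv.Perm (Fin n)) : DecidablePred (good σ) := fun _ => by
  unfold good; infer_instance

lemma Gchar (σ : Equiv.Perm (Fin n)) (j : Fin (n+1)) {i : ℕ} (hi : i < n) :
    F (ins σ j) i = if i = (j:ℕ) then 1 else if i + 1 = (j:ℕ) then 0
      else if i + 1 < (j:ℕ) then F σ i else F σ (i-1) := by
  have h1 := pval_ins σ j i (by omega)
  have h2 := pval_ins σ j (i+1) (by omega)
  simp only [Nat.add_sub_cancel] at h2
  have hle1 := pval_le σ i
  have hle2 := pval_le σ (i+1)
  have hle3 := pval_le σ (i-1)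
  unfold F
  rw [h1, h2]
  by_cases e4 : (j:ℕ) < i
  · rw [show i - 1 + 1 = i from by omega]
    split_ifs <;> omega
  · split_ifs <;> omega

lemma descents_ins (σ : Equiv.Perm (Fin n)) (j : Fin (n+1)) :
    descents (ins σ j) = descents σ + (if good σ j then 0 else 1) := by
  obtain _ | m := n
  · have : good σ j := Or.inl (Nat.lt_one_iff.mp j.isLt)
    rw [if_pos this]
    simp [descents]
  · have hjn : (j:ℕ) ≤ m+1 := by omega
    have hdes : descents (ins σ j) = ∑ i ∈ range (m+1), F (ins σ j) i := by
      rw [descents_eq, Nat.add_sub_cancel]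
    have hdes' : descents σ = ∑ i ∈ range m, F σ i := by
      rw [descents_eq, Nat.add_sub_cancel]
    have hG : ∀ i, i < m+1 → F (ins σ j) i = if i = (j:ℕ) then 1 else if i + 1 = (j:ℕ) then 0
      else if i + 1 < (j:ℕ) then F σ i else F σ (i-1) := fun i hi => Gchar σ j hi
    rcases Nat.lt_or_ge (j:ℕ) (m+1) with hjlt | hjge
    · rcases Nat.eq_zero_or_pos (j:ℕ) with hj0 | hjpos
      · -- jv = 0
        have hgood : ¬ good σ j := by unfold good; omega
        rw [if_neg hgood, hdes, Finset.sum_range_succ']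
        have hG0 : F (ins σ j) 0 = 1 := by rw [hG 0 (by omega), if_pos hj0.symm]
        have hGi : ∀ i ∈ range m, F (ins σ j) (i+1) = F σ i := by
          intro i hi
          rw [Finset.mem_range] at hi
          rw [hG (i+1) (by omega), if_neg (by omega), if_neg (by omega),
            if_neg (by omega), Nat.add_sub_cancel]
        rw [Finset.sum_congr rfl hGi, hG0, hdes']
      · -- 0 < jv < m+1
        obtain ⟨v, hv⟩ : ∃ v, (j:ℕ) = v + 1 := ⟨(j:ℕ)-1, by omega⟩
        have hvm : v + 1 ≤ m := by omega
        have hF01 : F σ v ≤ 1 := by unfold F; split <;> omega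
        have hFgood : (if good σ j then 0 else 1) = 1 - F σ v := by
          unfold good F
          simp only [hv, Nat.add_sub_cancel]
          split_ifs <;> omega
        have hs1 : descents σ
            = (∑ i ∈ range v, F σ i) + F σ v + ∑ i ∈ Ico (v+1) m, F σ i := by
          rw [hdes', Finset.range_eq_Ico,
            ← Finset.sum_Ico_consecutive _ (Nat.zero_le (v+1)) hvm,
            ← Finset.range_eq_Ico, Finset.sum_range_succ]
        have hs2 : ∑ i ∈ range (m+1), F (ins σ j) i
            = (∑ i ∈ range v, F σ i) + 1 + ∑ i ∈ Ico (v+1) m, F σ i := by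
          rw [Finset.range_eq_Ico,
            ← Finset.sum_Ico_consecutive _ (Nat.zero_le (v+2)) (show v+2 ≤ m+1 by omega),
            ← Finset.range_eq_Ico, Finset.sum_range_succ, Finset.sum_range_succ]
          have e1 : F (ins σ j) v = 0 := by
            rw [hG v (by omega), if_neg (by omega), if_pos (by omega)]
          have e2 : F (ins σ j) (v+1) = 1 := by
            rw [hG (v+1) (by omega), if_pos (by omega)]
          have e3 : ∑ i ∈ range v, F (ins σ j) i = ∑ i ∈ range v, F σ i := by
            refine Finset.sum_congr rfl fun i hi => ?_
            rw [Finset.mem_range] at hi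
            rw [hG i (by omega), if_neg (by omega), if_neg (by omega), if_pos (by omega)]
          have e4 : ∑ i ∈ Ico (v+2) (m+1), F (ins σ j) i
              = ∑ i ∈ Ico (v+1) m, F σ i := by
            rw [Finset.sum_Ico_eq_sum_range, Finset.sum_Ico_eq_sum_range,
              show m + 1 - (v+2) = m - (v+1) from by omega]
            refine Finset.sum_congr rfl fun t ht => ?_
            rw [Finset.mem_range] at ht
            rw [hG (v+2+t) (by omega), if_neg (by omega), if_neg (by omega),
              if_neg (by omega), show v+2+t-1 = v+1+t from by omega]
          rw [e1, e2, e3, e4]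
        rw [hdes, hs2, hs1, hFgood]
        omega
    · -- jv = m+1
      have hjn' : (j:ℕ) = m+1 := by omega
      have hgood : good σ j := Or.inl hjn'
      rw [if_pos hgood, hdes, Finset.sum_range_succ]
      have e1 : F (ins σ j) m = 0 := by
        rw [hG m (by omega), if_neg (by omega), if_pos (by omega)]
      have e2 : ∑ i ∈ range m, F (ins σ j) i = ∑ i ∈ range m, F σ i := by
        refine Finset.sum_congr rfl fun i hi => ?_
        rw [Finset.mem_range] at hi
        rw [hG i (by omega), if_neg (by omega), if_neg (by omega), if_pos (by omega)]
      rw [e1, e2, hdes', Nat.add_zero]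


lemma card_good (σ : Equiv.Perm (Fin n)) :
    (Finset.univ.filter (good σ)).card = descents σ + 1 := by
  have h1 : (Finset.univ.filter (good σ)).card
      = ∑ j : Fin (n+1), if good σ j then 1 else 0 := by
    rw [Finset.card_filter]
  have h2 : ∀ j : Fin (n+1), (if good σ j then (1:ℕ) else 0)
      = if (j:ℕ) = n ∨ (0 < (j:ℕ) ∧ pval σ (j:ℕ) < pval σ ((j:ℕ)-1)) then 1 else 0 :=
    fun j => if_congr Iff.rfl rfl rfl
  rw [h1, Finset.sum_congr rfl (fun j _ => h2 j), Fin.sum_univ_eq_sum_range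
    (fun a => if a = n ∨ (0 < a ∧ pval σ a < pval σ (a-1)) then 1 else 0) (n+1)]
  rw [Finset.sum_range_succ, if_pos (Or.inl rfl)]
  congr 1
  obtain _ | m := n
  · simp [descents]
  · rw [Finset.sum_range_succ']
    have h0 : (if (0:ℕ) = m+1 ∨ (0 < 0 ∧ pval σ 0 < pval σ (0-1)) then 1 else 0) = 0 := by
      rw [if_neg]; omega
    rw [h0, Nat.add_zero, descents_eq, Nat.add_sub_cancel]
    refine Finset.sum_congr rfl fun i hi => ?_
    rw [Finset.mem_range] at hi
    unfold F
    by_cases hd : pval σ (i+1) < pval σ i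
    · rw [if_pos, if_pos hd]
      right
      refine ⟨by omega, ?_⟩
      rw [Nat.add_sub_cancel]
      exact hd
    · rw [if_neg, if_neg hd]
      rw [Nat.add_sub_cancel]
      omega

lemma ins_bijective :
    Function.Bijective (fun p : Equiv.Perm (Fin n) × Fin (n+1) => ins p.1 p.2) := by
  rw [Fintype.bijective_iff_injective_and_card]
  constructor
  · rintro ⟨σ, j⟩ ⟨τ, k⟩ h
    simp only at h
    have hjk : j = k := by
      have h1 : ins σ j j = Fin.last n := ins_apply_self σ j
      have h2 : ins τ k k = Fin.last n := ins_apply_self τ k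
      rw [h] at h1
      exact (ins τ k).injective (h1.trans h2.symm)
    subst hjk
    have hστ : σ = τ := by
      ext i
      have h1 := ins_apply_succAbove σ j i
      have h2 := ins_apply_succAbove τ j i
      rw [h] at h1
      have := h1.symm.trans h2
      exact congrArg Fin.val (Fin.castSucc_injective n this)
    rw [hστ]
  · simp [Fintype.card_perm, Nat.factorial_succ, mul_comm]


lemma descents_le (σ : Equiv.Perm (Fin n)) : descents σ ≤ n - 1 :=
  le_trans (Finset.card_filter_le _ _) (by rw [Finset.card_range])

open MvPolynomial in
lemma D_mono (D : Derivation ℤ (MvPolynomial (Fin 2) ℤ) (MvPolynomial (Fin 2) ℤ))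
    (hx : D (X 0) = X 0 * X 1) (hy : D (X 1) = X 0 * X 1)
    (a b : ℕ) (ha : 1 ≤ a) (hb : 1 ≤ b) :
    D (X 0 ^ a * X 1 ^ b)
      = (a : MvPolynomial (Fin 2) ℤ) * (X 0 ^ a * X 1 ^ (b+1))
        + (b : MvPolynomial (Fin 2) ℤ) * (X 0 ^ (a+1) * X 1 ^ b) := by
  obtain ⟨a', rfl⟩ : ∃ a', a = a' + 1 := ⟨a - 1, by omega⟩
  obtain ⟨b', rfl⟩ : ∃ b', b = b' + 1 := ⟨b - 1, by omega⟩
  rw [Derivation.leibniz, Derivation.leibniz_pow, Derivation.leibniz_pow, hx, hy]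
  simp only [Nat.add_sub_cancel, smul_eq_mul, nsmul_eq_mul]
  push_cast
  ring

open MvPolynomial in
lemma key (D : Derivation ℤ (MvPolynomial (Fin 2) ℤ) (MvPolynomial (Fin 2) ℤ))
    (hx : D (X 0) = X 0 * X 1) (hy : D (X 1) = X 0 * X 1) :
    ∀ n : ℕ, 1 ≤ n → (⇑D)^[n] (X 0 : MvPolynomial (Fin 2) ℤ)
      = ∑ σ : Equiv.Perm (Fin n), X 0 ^ (descents σ + 1) * X 1 ^ (n - descents σ) := by
  intro n
  induction n with
  | zero => omega
  | succ m IH =>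
    intro _
    rcases Nat.eq_zero_or_pos m with hm | hm
    · subst hm
      have hd : ∀ σ : Equiv.Perm (Fin 1), descents σ = 0 := fun σ => by
        simp [descents]
      rw [Function.iterate_one, hx,
        Finset.sum_congr rfl (fun (σ : Equiv.Perm (Fin 1)) _ => by rw [hd σ]),
        Finset.sum_const]
      simp [Fintype.card_perm]
    · rw [Function.iterate_succ_apply', IH hm, map_sum]
      -- LHS : ∑ σ : Perm (Fin m), D (monomial)
      have hL : ∀ σ : Equiv.Perm (Fin m),
          D (X 0 ^ (descents σ + 1) * X 1 ^ (m - descents σ))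
          = (descents σ + 1) • ((X 0 : MvPolynomial (Fin 2) ℤ) ^ (descents σ + 1)
              * X 1 ^ (m + 1 - descents σ))
            + (m - descents σ) • ((X 0 : MvPolynomial (Fin 2) ℤ) ^ (descents σ + 2)
              * X 1 ^ (m - descents σ)) := by
        intro σ
        have hds := descents_le σ
        rw [D_mono D hx hy _ _ (by omega) (by omega)]
        rw [show m - descents σ + 1 = m + 1 - descents σ from by omega,
          show descents σ + 1 + 1 = descents σ + 2 from rfl]
        simp only [nsmul_eq_mul]
      rw [Finset.sum_congr rfl (fun σ _ => hL σ)]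
      -- RHS : reindex along ins
      rw [← Fintype.sum_bijective _ (ins_bijective (n := m))
        (fun p : Equiv.Perm (Fin m) × Fin (m+1) =>
          (X 0 : MvPolynomial (Fin 2) ℤ) ^ (descents (ins p.1 p.2) + 1)
            * X 1 ^ (m + 1 - descents (ins p.1 p.2)))
        _ (fun p => rfl)]
      rw [Fintype.sum_prod_type]
      refine Finset.sum_congr rfl fun σ _ => ?_
      have hds := descents_le σ
      have hinner : ∀ j : Fin (m+1),
          (X 0 : MvPolynomial (Fin 2) ℤ) ^ (descents (ins σ j) + 1)
            * X 1 ^ (m + 1 - descents (ins σ j))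
          = if good σ j
            then (X 0 : MvPolynomial (Fin 2) ℤ) ^ (descents σ + 1) * X 1 ^ (m + 1 - descents σ)
            else (X 0 : MvPolynomial (Fin 2) ℤ) ^ (descents σ + 2) * X 1 ^ (m - descents σ) := by
        intro j
        rw [descents_ins]
        by_cases hg : good σ j
        · rw [if_pos hg, if_pos hg]; norm_num
        · rw [if_neg hg, if_neg hg,
            show descents σ + 1 + 1 = descents σ + 2 from rfl,
            show m + 1 - (descents σ + 1) = m - descents σ from by omega]
      rw [Finset.sum_congr rfl (fun j _ => hinner j), Finset.sum_ite,
        Finset.sum_const, Finset.sum_const, card_good,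
        Finset.filter_not, Finset.card_sdiff_of_subset (Finset.filter_subset _ _), card_good]
      congr 2
      simp only [Finset.card_univ, Fintype.card_fin]
      omega

end EulerAux

/-- For the grammar `G = {x → xy, y → xy}` (here `x = X 0`, `y = X 1`):
`Dⁿ(x) = x·∑_{k=0}^{n-1} A(n,k) x^k y^{n-k}` for `n ≥ 1`. -/
theorem stmt11
    (D : Derivation ℤ (MvPolynomial (Fin 2) ℤ) (MvPolynomial (Fin 2) ℤ))
    (hx : D (MvPolynomial.X 0) = MvPolynomial.X 0 * MvPolynomial.X 1)
    (hy : D (MvPolynomial.X 1) = MvPolynomial.X 0 * MvPolynomial.X 1) :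
    ∀ n : ℕ, 1 ≤ n →
      (⇑D)^[n] (MvPolynomial.X 0)
        = MvPolynomial.X 0 * ∑ k ∈ Finset.range n,
            (eulerianNum n k : MvPolynomial (Fin 2) ℤ)
              * MvPolynomial.X 0 ^ k * MvPolynomial.X 1 ^ (n - k) := by
  intro n hn
  rw [EulerAux.key D hx hy n hn, Finset.mul_sum,
    ← Finset.sum_fiberwise_of_maps_to
      (g := descents)
      (t := Finset.range n)
      (fun σ _ => Finset.mem_range.mpr (by have := EulerAux.descents_le σ; omega))
      (fun σ => MvPolynomial.X 0 ^ (descents σ + 1)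
        * MvPolynomial.X 1 ^ (n - descents σ))]
  refine Finset.sum_congr rfl fun k hk => ?_
  have hinner : ∀ σ ∈ Finset.univ.filter (fun σ : Equiv.Perm (Fin n) => descents σ = k),
      (MvPolynomial.X 0 : MvPolynomial (Fin 2) ℤ) ^ (descents σ + 1)
        * MvPolynomial.X 1 ^ (n - descents σ)
      = MvPolynomial.X 0 ^ (k + 1) * MvPolynomial.X 1 ^ (n - k) := by
    intro σ hσ
    rw [Finset.mem_filter] at hσ
    rw [hσ.2]
  rw [Finset.sum_congr rfl hinner, Finset.sum_const]
  rw [show (Finset.univ.filter (fun σ : Equiv.Perm (Fin n) => descents σ = k)).card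
    = eulerianNum n k from rfl]
  rw [nsmul_eq_mul]
  ring
end
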